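/- arXiv:2501.06373 — 3 statements merged into one kernel-verified Lean document; each statement's English description precedes it below -/
import Mathlib

section
/- Let (u, φ, ψ, w) be a classical solution of the suspension-bridge Shear beam system in thermoelasticity of type III. Then for every t > 0 the energy E is differentiable and satisfies the dissipation identity dE(t)/dt = −μ ∫₀^L u_t² dx − γ ∫₀^L φ_t² dx − κ ∫₀^L w_{xt}² dx, which is ≤ 0. -/
open MeasureTheory Set

noncomputable section

/-- Partial derivative with respect to the time variable (second argument). -/
def pdt (f : ℝ → ℝ → ℝ) (x t : ℝ) : ℝ := deriv (fun s => f x s) t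

/-- Partial derivative with respect to the space variable (first argument). -/
def pdx (f : ℝ → ℝ → ℝ) (x t : ℝ) : ℝ := deriv (fun y => f y t) x

/-- A classical solution of the suspension-bridge Shear beam system in
thermoelasticity of type III. -/
structure IsShearSolution (L ρ α lm μ ρ₁ K γ b ρ₃ δ κ β : ℝ)
    (u φ ψ w : ℝ → ℝ → ℝ) : Prop where
  smooth_u : ContDiff ℝ 3 (fun p : ℝ × ℝ => u p.1 p.2)
  smooth_phi : ContDiff ℝ 3 (fun p : ℝ × ℝ => φ p.1 p.2)
  smooth_psi : ContDiff ℝ 3 (fun p : ℝ × ℝ => ψ p.1 p.2)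
  smooth_w : ContDiff ℝ 3 (fun p : ℝ × ℝ => w p.1 p.2)
  eq1 : ∀ x ∈ Ioo (0:ℝ) L, ∀ t : ℝ, 0 < t →
    ρ * pdt (pdt u) x t - α * pdx (pdx u) x t - lm * (φ x t - u x t)
      + μ * pdt u x t = 0
  eq2 : ∀ x ∈ Ioo (0:ℝ) L, ∀ t : ℝ, 0 < t →
    ρ₁ * pdt (pdt φ) x t - K * pdx (fun y s => pdx φ y s + ψ y s) x t
      + lm * (φ x t - u x t) + γ * pdt φ x t + β * pdx (pdt w) x t = 0
  eq3 : ∀ x ∈ Ioo (0:ℝ) L, ∀ t : ℝ, 0 < t →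
    -b * pdx (pdx ψ) x t + K * (pdx φ x t + ψ x t) = 0
  eq4 : ∀ x ∈ Ioo (0:ℝ) L, ∀ t : ℝ, 0 < t →
    ρ₃ * pdt (pdt w) x t - δ * pdx (pdx w) x t + β * pdx (pdt φ) x t
      - κ * pdx (pdx (pdt w)) x t = 0
  bc : ∀ t : ℝ, 0 ≤ t →
    u 0 t = 0 ∧ u L t = 0 ∧ φ 0 t = 0 ∧ φ L t = 0 ∧
    ψ 0 t = 0 ∧ ψ L t = 0 ∧ w 0 t = 0 ∧ w L t = 0

/-- The energy functional of the system. -/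
def energy (L ρ α lm ρ₁ K b ρ₃ δ : ℝ) (u φ ψ w : ℝ → ℝ → ℝ) (t : ℝ) : ℝ :=
  (1/2) * ∫ x in (0:ℝ)..L,
    (ρ * (pdt u x t)^2 + α * (pdx u x t)^2 + lm * (φ x t - u x t)^2
      + ρ₁ * (pdt φ x t)^2 + K * (pdx φ x t + ψ x t)^2 + b * (pdx ψ x t)^2
      + ρ₃ * (pdt w x t)^2 + δ * (pdx w x t)^2)

/-! ### Auxiliary lemmas about partial derivatives -/

theorem hasDerivAt_pdt {f : ℝ → ℝ → ℝ} (hf : ContDiff ℝ 1 (fun p : ℝ × ℝ => f p.1 p.2))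
    (x t : ℝ) : HasDerivAt (fun s => f x s) (pdt f x t) t := by
  have h : DifferentiableAt ℝ (fun s : ℝ => f x s) t := by
    have := (hf.differentiable one_ne_zero).comp
      ((differentiable_const x).prodMk differentiable_id : Differentiable ℝ fun s : ℝ => (x, s))
    exact this.differentiableAt
  exact h.hasDerivAt

theorem hasDerivAt_pdx {f : ℝ → ℝ → ℝ} (hf : ContDiff ℝ 1 (fun p : ℝ × ℝ => f p.1 p.2))
    (x t : ℝ) : HasDerivAt (fun y => f y t) (pdx f x t) x := by
  have h : DifferentiableAt ℝ (fun y : ℝ => f y t) x := by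
    have := (hf.differentiable one_ne_zero).comp
      (differentiable_id.prodMk (differentiable_const t) : Differentiable ℝ fun y : ℝ => (y, t))
    exact this.differentiableAt
  exact h.hasDerivAt

theorem pdt_eq_fderiv {f : ℝ → ℝ → ℝ} (hf : ContDiff ℝ 1 (fun p : ℝ × ℝ => f p.1 p.2))
    (x t : ℝ) : pdt f x t = fderiv ℝ (fun p : ℝ × ℝ => f p.1 p.2) (x, t) (0, 1) := by
  have hd : HasDerivAt (fun s : ℝ => (x, s)) ((0 : ℝ), (1 : ℝ)) t :=
    (hasDerivAt_const t x).prodMk (hasDerivAt_id t)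
  have hF : HasFDerivAt (fun p : ℝ × ℝ => f p.1 p.2)
      (fderiv ℝ (fun p : ℝ × ℝ => f p.1 p.2) (x, t)) (x, t) :=
    ((hf.differentiable one_ne_zero) (x, t)).hasFDerivAt
  exact (hF.comp_hasDerivAt t hd).deriv

theorem pdx_eq_fderiv {f : ℝ → ℝ → ℝ} (hf : ContDiff ℝ 1 (fun p : ℝ × ℝ => f p.1 p.2))
    (x t : ℝ) : pdx f x t = fderiv ℝ (fun p : ℝ × ℝ => f p.1 p.2) (x, t) (1, 0) := by
  have hd : HasDerivAt (fun y : ℝ => (y, t)) ((1 : ℝ), (0 : ℝ)) x :=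
    (hasDerivAt_id x).prodMk (hasDerivAt_const x t)
  have hF : HasFDerivAt (fun p : ℝ × ℝ => f p.1 p.2)
      (fderiv ℝ (fun p : ℝ × ℝ => f p.1 p.2) (x, t)) (x, t) :=
    ((hf.differentiable one_ne_zero) (x, t)).hasFDerivAt
  exact (hF.comp_hasDerivAt x hd).deriv

theorem contDiff_pdt {f : ℝ → ℝ → ℝ} {n m : WithTop ℕ∞}
    (hf : ContDiff ℝ n (fun p : ℝ × ℝ => f p.1 p.2)) (hmn : m + 1 ≤ n) :
    ContDiff ℝ m (fun p : ℝ × ℝ => pdt f p.1 p.2) := by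
  have h1 : ContDiff ℝ 1 (fun p : ℝ × ℝ => f p.1 p.2) :=
    hf.of_le (le_trans (by exact le_add_self) hmn)
  have : (fun p : ℝ × ℝ => pdt f p.1 p.2)
      = fun p : ℝ × ℝ => fderiv ℝ (fun q : ℝ × ℝ => f q.1 q.2) p ((0 : ℝ), (1 : ℝ)) := by
    funext p
    exact pdt_eq_fderiv h1 p.1 p.2
  rw [this]
  exact (hf.fderiv_right hmn).clm_apply contDiff_const

theorem contDiff_pdx {f : ℝ → ℝ → ℝ} {n m : WithTop ℕ∞}
    (hf : ContDiff ℝ n (fun p : ℝ × ℝ => f p.1 p.2)) (hmn : m + 1 ≤ n) :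
    ContDiff ℝ m (fun p : ℝ × ℝ => pdx f p.1 p.2) := by
  have h1 : ContDiff ℝ 1 (fun p : ℝ × ℝ => f p.1 p.2) :=
    hf.of_le (le_trans (by exact le_add_self) hmn)
  have : (fun p : ℝ × ℝ => pdx f p.1 p.2)
      = fun p : ℝ × ℝ => fderiv ℝ (fun q : ℝ × ℝ => f q.1 q.2) p ((1 : ℝ), (0 : ℝ)) := by
    funext p
    exact pdx_eq_fderiv h1 p.1 p.2
  rw [this]
  exact (hf.fderiv_right hmn).clm_apply contDiff_const

theorem pdt_pdx_comm {f : ℝ → ℝ → ℝ} (hf : ContDiff ℝ 2 (fun p : ℝ × ℝ => f p.1 p.2))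
    (x t : ℝ) : pdt (pdx f) x t = pdx (pdt f) x t := by
  set F := fun p : ℝ × ℝ => f p.1 p.2 with hF
  have h1 : ContDiff ℝ 1 F := hf.of_le one_le_two
  have hfd : ContDiff ℝ 1 (fderiv ℝ F) := hf.fderiv_right (by norm_num)
  have hder : ∀ p : ℝ × ℝ, HasFDerivAt F (fderiv ℝ F p) p := fun p =>
    ((h1.differentiable one_ne_zero) p).hasFDerivAt
  have hsnd : HasFDerivAt (fderiv ℝ F) (fderiv ℝ (fderiv ℝ F) (x, t)) (x, t) :=
    ((hfd.differentiable one_ne_zero) (x, t)).hasFDerivAt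
  have hsymm := second_derivative_symmetric hder hsnd ((1:ℝ), (0:ℝ)) ((0:ℝ), (1:ℝ))
  have hpdx1 : ContDiff ℝ 1 (fun p : ℝ × ℝ => pdx f p.1 p.2) := contDiff_pdx hf (by norm_num)
  have hpdt1 : ContDiff ℝ 1 (fun p : ℝ × ℝ => pdt f p.1 p.2) := contDiff_pdt hf (by norm_num)
  have e1 : pdt (pdx f) x t
      = fderiv ℝ (fun p : ℝ × ℝ => fderiv ℝ F p (1, 0)) (x, t) (0, 1) := by
    rw [pdt_eq_fderiv hpdx1]
    congr 1
    apply Filter.EventuallyEq.fderiv_eq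
    filter_upwards with p
    exact pdx_eq_fderiv h1 p.1 p.2
  have e2 : pdx (pdt f) x t
      = fderiv ℝ (fun p : ℝ × ℝ => fderiv ℝ F p (0, 1)) (x, t) (1, 0) := by
    rw [pdx_eq_fderiv hpdt1]
    congr 1
    apply Filter.EventuallyEq.fderiv_eq
    filter_upwards with p
    exact pdt_eq_fderiv h1 p.1 p.2
  have key : ∀ v : ℝ × ℝ, HasFDerivAt (fun p : ℝ × ℝ => fderiv ℝ F p v)
      ((ContinuousLinearMap.apply ℝ ℝ v).comp (fderiv ℝ (fderiv ℝ F) (x, t))) (x, t) :=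
    fun v => (ContinuousLinearMap.apply ℝ ℝ v).hasFDerivAt.comp (x, t) hsnd
  rw [e1, e2, (key (1,0)).fderiv, (key (0,1)).fderiv]
  simp only [ContinuousLinearMap.coe_comp', Function.comp_apply,
    ContinuousLinearMap.apply_apply]
  exact hsymm.symm

theorem pdx_add {f g : ℝ → ℝ → ℝ} (hf : ContDiff ℝ 1 (fun p : ℝ × ℝ => f p.1 p.2))
    (hg : ContDiff ℝ 1 (fun p : ℝ × ℝ => g p.1 p.2)) (x t : ℝ) :
    pdx (fun y s => f y s + g y s) x t = pdx f x t + pdx g x t := by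
  have h1 : DifferentiableAt ℝ (fun y : ℝ => f y t) x :=
    ((hf.differentiable one_ne_zero).comp
      (differentiable_id.prodMk (differentiable_const t))).differentiableAt
  have h2 : DifferentiableAt ℝ (fun y : ℝ => g y t) x :=
    ((hg.differentiable one_ne_zero).comp
      (differentiable_id.prodMk (differentiable_const t))).differentiableAt
  exact deriv_add h1 h2

theorem hasDerivAt_param_integral {a b : ℝ} {G H : ℝ → ℝ → ℝ}
    (hG : Continuous fun p : ℝ × ℝ => G p.1 p.2)
    (hH : Continuous fun p : ℝ × ℝ => H p.1 p.2)
    (hd : ∀ x s : ℝ, HasDerivAt (fun s' => G x s') (H x s) s) (t₀ : ℝ) :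
    HasDerivAt (fun t => ∫ x in a..b, G x t) (∫ x in a..b, H x t₀) t₀ := by
  obtain ⟨C, hC⟩ := ((isCompact_uIcc (a := a) (b := b)).prod
    (isCompact_Icc (a := t₀ - 1) (b := t₀ + 1))).exists_bound_of_continuousOn hH.continuousOn
  have hsub : Metric.ball t₀ 1 ⊆ Icc (t₀ - 1) (t₀ + 1) := by
    rw [Real.ball_eq_Ioo]; exact Ioo_subset_Icc_self
  refine (intervalIntegral.hasDerivAt_integral_of_dominated_loc_of_deriv_le
    (F := fun t x => G x t) (F' := fun t x => H x t) (bound := fun _ => C)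
    (μ := volume) (a := a) (b := b) (Metric.ball_mem_nhds t₀ one_pos) ?_ ?_ ?_ ?_ ?_ ?_).2
  · filter_upwards with s
    exact (hG.comp (continuous_id.prodMk continuous_const)).aestronglyMeasurable
  · exact (hG.comp (continuous_id.prodMk continuous_const)).intervalIntegrable a b
  · exact (hH.comp (continuous_id.prodMk continuous_const)).aestronglyMeasurable
  · filter_upwards with x hx
    intro s hs
    exact hC (x, s) ⟨uIoc_subset_uIcc hx, hsub hs⟩
  · exact intervalIntegrable_const
  · filter_upwards with x _
    intro s _
    exact hd x s

theorem pdt_boundary_zero {f : ℝ → ℝ → ℝ} {c t : ℝ} (ht : 0 < t)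
    (h : ∀ s : ℝ, 0 ≤ s → f c s = 0) : pdt f c t = 0 := by
  have hev : (fun s => f c s) =ᶠ[nhds t] fun _ => (0 : ℝ) := by
    filter_upwards [Ioi_mem_nhds ht] with s hs
    exact h s (le_of_lt hs)
  rw [pdt, hev.deriv_eq, deriv_const]

/-! ### The integrand, its time derivative, and the flux -/

def eInt (ρ α lm ρ₁ K b ρ₃ δ : ℝ) (u φ ψ w : ℝ → ℝ → ℝ) (x s : ℝ) : ℝ :=
  ρ * (pdt u x s)^2 + α * (pdx u x s)^2 + lm * (φ x s - u x s)^2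
    + ρ₁ * (pdt φ x s)^2 + K * (pdx φ x s + ψ x s)^2 + b * (pdx ψ x s)^2
    + ρ₃ * (pdt w x s)^2 + δ * (pdx w x s)^2

def hInt (ρ α lm ρ₁ K b ρ₃ δ : ℝ) (u φ ψ w : ℝ → ℝ → ℝ) (x s : ℝ) : ℝ :=
  ρ * pdt u x s * pdt (pdt u) x s + α * pdx u x s * pdt (pdx u) x s
    + lm * (φ x s - u x s) * (pdt φ x s - pdt u x s)
    + ρ₁ * pdt φ x s * pdt (pdt φ) x s
    + K * (pdx φ x s + ψ x s) * (pdt (pdx φ) x s + pdt ψ x s)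
    + b * pdx ψ x s * pdt (pdx ψ) x s
    + ρ₃ * pdt w x s * pdt (pdt w) x s + δ * pdx w x s * pdt (pdx w) x s

def flux (α K b δ κ β : ℝ) (u φ ψ w : ℝ → ℝ → ℝ) (x s : ℝ) : ℝ :=
  α * pdx u x s * pdt u x s + K * (pdx φ x s + ψ x s) * pdt φ x s
    + b * pdx ψ x s * pdt ψ x s + δ * pdx w x s * pdt w x s
    + κ * pdx (pdt w) x s * pdt w x s - β * pdt φ x s * pdt w x s

def fluxDx (α K b δ κ β : ℝ) (u φ ψ w : ℝ → ℝ → ℝ) (x s : ℝ) : ℝ :=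
  α * pdx (pdx u) x s * pdt u x s + α * pdx u x s * pdx (pdt u) x s
    + K * (pdx (pdx φ) x s + pdx ψ x s) * pdt φ x s
    + K * (pdx φ x s + ψ x s) * pdx (pdt φ) x s
    + b * pdx (pdx ψ) x s * pdt ψ x s + b * pdx ψ x s * pdx (pdt ψ) x s
    + δ * pdx (pdx w) x s * pdt w x s + δ * pdx w x s * pdx (pdt w) x s
    + κ * pdx (pdx (pdt w)) x s * pdt w x s + κ * (pdx (pdt w) x s)^2
    - β * pdx (pdt φ) x s * pdt w x s - β * pdt φ x s * pdx (pdt w) x s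

/-- energy dissipation identity. -/
theorem energy_dissipation_identity
    {L ρ α lm μ ρ₁ K γ b ρ₃ δ κ β : ℝ}
    (hL : 0 < L) (hρ : 0 < ρ) (hα : 0 < α) (hlm : 0 < lm) (hμ : 0 < μ)
    (hρ₁ : 0 < ρ₁) (hK : 0 < K) (hγ : 0 < γ) (hb : 0 < b) (hρ₃ : 0 < ρ₃)
    (hδ : 0 < δ) (hκ : 0 < κ) (hβ : β ≠ 0)
    {u φ ψ w : ℝ → ℝ → ℝ}
    (hsol : IsShearSolution L ρ α lm μ ρ₁ K γ b ρ₃ δ κ β u φ ψ w) :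
    ∀ t : ℝ, 0 < t →
      HasDerivAt (energy L ρ α lm ρ₁ K b ρ₃ δ u φ ψ w)
        (-(μ * ∫ x in (0:ℝ)..L, (pdt u x t)^2)
          - γ * (∫ x in (0:ℝ)..L, (pdt φ x t)^2)
          - κ * (∫ x in (0:ℝ)..L, (pdx (pdt w) x t)^2)) t ∧
      (-(μ * ∫ x in (0:ℝ)..L, (pdt u x t)^2)
          - γ * (∫ x in (0:ℝ)..L, (pdt φ x t)^2)
          - κ * (∫ x in (0:ℝ)..L, (pdx (pdt w) x t)^2)) ≤ 0 := by
  intro t ht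
  obtain ⟨hu3, hφ3, hψ3, hw3, eq1, eq2, eq3, eq4, bc⟩ := hsol
  -- second-order regularity of first partials
  have hut : ContDiff ℝ 2 (fun p : ℝ × ℝ => pdt u p.1 p.2) := contDiff_pdt hu3 (by norm_num)
  have hux : ContDiff ℝ 2 (fun p : ℝ × ℝ => pdx u p.1 p.2) := contDiff_pdx hu3 (by norm_num)
  have hφt : ContDiff ℝ 2 (fun p : ℝ × ℝ => pdt φ p.1 p.2) := contDiff_pdt hφ3 (by norm_num)
  have hφx : ContDiff ℝ 2 (fun p : ℝ × ℝ => pdx φ p.1 p.2) := contDiff_pdx hφ3 (by norm_num)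
  have hψt : ContDiff ℝ 2 (fun p : ℝ × ℝ => pdt ψ p.1 p.2) := contDiff_pdt hψ3 (by norm_num)
  have hψx : ContDiff ℝ 2 (fun p : ℝ × ℝ => pdx ψ p.1 p.2) := contDiff_pdx hψ3 (by norm_num)
  have hwt : ContDiff ℝ 2 (fun p : ℝ × ℝ => pdt w p.1 p.2) := contDiff_pdt hw3 (by norm_num)
  have hwx : ContDiff ℝ 2 (fun p : ℝ × ℝ => pdx w p.1 p.2) := contDiff_pdx hw3 (by norm_num)
  -- first-order regularity of second partials
  have hutt : ContDiff ℝ 1 (fun p : ℝ × ℝ => pdt (pdt u) p.1 p.2) := contDiff_pdt hut (by norm_num)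
  have huxx : ContDiff ℝ 1 (fun p : ℝ × ℝ => pdx (pdx u) p.1 p.2) := contDiff_pdx hux (by norm_num)
  have huxt : ContDiff ℝ 1 (fun p : ℝ × ℝ => pdx (pdt u) p.1 p.2) := contDiff_pdx hut (by norm_num)
  have hutx : ContDiff ℝ 1 (fun p : ℝ × ℝ => pdt (pdx u) p.1 p.2) := contDiff_pdt hux (by norm_num)
  have hφtt : ContDiff ℝ 1 (fun p : ℝ × ℝ => pdt (pdt φ) p.1 p.2) := contDiff_pdt hφt (by norm_num)
  have hφxx : ContDiff ℝ 1 (fun p : ℝ × ℝ => pdx (pdx φ) p.1 p.2) := contDiff_pdx hφx (by norm_num)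
  have hφxt : ContDiff ℝ 1 (fun p : ℝ × ℝ => pdx (pdt φ) p.1 p.2) := contDiff_pdx hφt (by norm_num)
  have hφtx : ContDiff ℝ 1 (fun p : ℝ × ℝ => pdt (pdx φ) p.1 p.2) := contDiff_pdt hφx (by norm_num)
  have hψtt : ContDiff ℝ 1 (fun p : ℝ × ℝ => pdt (pdt ψ) p.1 p.2) := contDiff_pdt hψt (by norm_num)
  have hψxx : ContDiff ℝ 1 (fun p : ℝ × ℝ => pdx (pdx ψ) p.1 p.2) := contDiff_pdx hψx (by norm_num)
  have hψxt : ContDiff ℝ 1 (fun p : ℝ × ℝ => pdx (pdt ψ) p.1 p.2) := contDiff_pdx hψt (by norm_num)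
  have hψtx : ContDiff ℝ 1 (fun p : ℝ × ℝ => pdt (pdx ψ) p.1 p.2) := contDiff_pdt hψx (by norm_num)
  have hwtt : ContDiff ℝ 1 (fun p : ℝ × ℝ => pdt (pdt w) p.1 p.2) := contDiff_pdt hwt (by norm_num)
  have hwxx : ContDiff ℝ 1 (fun p : ℝ × ℝ => pdx (pdx w) p.1 p.2) := contDiff_pdx hwx (by norm_num)
  have hwxt : ContDiff ℝ 1 (fun p : ℝ × ℝ => pdx (pdt w) p.1 p.2) := contDiff_pdx hwt (by norm_num)
  have hwtx : ContDiff ℝ 1 (fun p : ℝ × ℝ => pdt (pdx w) p.1 p.2) := contDiff_pdt hwx (by norm_num)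
  have hwxxt : ContDiff ℝ 0 (fun p : ℝ × ℝ => pdx (pdx (pdt w)) p.1 p.2) :=
    contDiff_pdx hwxt (by norm_num)
  -- continuity facts (uncurried)
  have cu : Continuous (fun p : ℝ × ℝ => u p.1 p.2) := hu3.continuous
  have cφ : Continuous (fun p : ℝ × ℝ => φ p.1 p.2) := hφ3.continuous
  have cψ : Continuous (fun p : ℝ × ℝ => ψ p.1 p.2) := hψ3.continuous
  have cw : Continuous (fun p : ℝ × ℝ => w p.1 p.2) := hw3.continuous
  have cut := hut.continuous; have cux := hux.continuous
  have cφt := hφt.continuous; have cφx := hφx.continuous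
  have cψt := hψt.continuous; have cψx := hψx.continuous
  have cwt := hwt.continuous; have cwx := hwx.continuous
  have cutt := hutt.continuous; have cuxx := huxx.continuous
  have cuxt := huxt.continuous; have cutx := hutx.continuous
  have cφtt := hφtt.continuous; have cφxx := hφxx.continuous
  have cφxt := hφxt.continuous; have cφtx := hφtx.continuous
  have cψtt := hψtt.continuous; have cψxx := hψxx.continuous
  have cψxt := hψxt.continuous; have cψtx := hψtx.continuous
  have cwtt := hwtt.continuous; have cwxx := hwxx.continuous
  have cwxt := hwxt.continuous; have cwtx := hwtx.continuous
  have cwxxt := hwxxt.continuous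
  -- continuity of the energy integrand (uncurried)
  have cE : Continuous (fun p : ℝ × ℝ => eInt ρ α lm ρ₁ K b ρ₃ δ u φ ψ w p.1 p.2) := by
    unfold eInt
    exact ((((((((continuous_const.mul (cut.pow 2)).add
      (continuous_const.mul (cux.pow 2))).add
      (continuous_const.mul ((cφ.sub cu).pow 2))).add
      (continuous_const.mul (cφt.pow 2))).add
      (continuous_const.mul ((cφx.add cψ).pow 2))).add
      (continuous_const.mul (cψx.pow 2))).add
      (continuous_const.mul (cwt.pow 2))).add
      (continuous_const.mul (cwx.pow 2)))
  have cH : Continuous (fun p : ℝ × ℝ => hInt ρ α lm ρ₁ K b ρ₃ δ u φ ψ w p.1 p.2) := by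
    unfold hInt
    exact (((((((((continuous_const.mul cut).mul cutt).add
      ((continuous_const.mul cux).mul cutx)).add
      ((continuous_const.mul (cφ.sub cu)).mul (cφt.sub cut))).add
      ((continuous_const.mul cφt).mul cφtt)).add
      ((continuous_const.mul (cφx.add cψ)).mul (cφtx.add cψt))).add
      ((continuous_const.mul cψx).mul cψtx)).add
      ((continuous_const.mul cwt).mul cwtt)).add
      ((continuous_const.mul cwx).mul cwtx))
  -- time derivative of the integrand
  have hd : ∀ x s : ℝ, HasDerivAt (fun s' => eInt ρ α lm ρ₁ K b ρ₃ δ u φ ψ w x s')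
      (2 * hInt ρ α lm ρ₁ K b ρ₃ δ u φ ψ w x s) s := by
    intro x s
    have d_u := hasDerivAt_pdt (hu3.of_le (by norm_num)) x s
    have d_φ := hasDerivAt_pdt (hφ3.of_le (by norm_num)) x s
    have d_ut := hasDerivAt_pdt (hut.of_le one_le_two) x s
    have d_ux := hasDerivAt_pdt (hux.of_le one_le_two) x s
    have d_φt := hasDerivAt_pdt (hφt.of_le one_le_two) x s
    have d_φx := hasDerivAt_pdt (hφx.of_le one_le_two) x s
    have d_ψ := hasDerivAt_pdt (hψ3.of_le (by norm_num)) x s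
    have d_ψx := hasDerivAt_pdt (hψx.of_le one_le_two) x s
    have d_wt := hasDerivAt_pdt (hwt.of_le one_le_two) x s
    have d_wx := hasDerivAt_pdt (hwx.of_le one_le_two) x s
    have total := (((((((((d_ut.fun_pow 2).const_mul ρ).fun_add
      ((d_ux.fun_pow 2).const_mul α)).fun_add
      (((d_φ.fun_sub d_u).fun_pow 2).const_mul lm)).fun_add
      ((d_φt.fun_pow 2).const_mul ρ₁)).fun_add
      (((d_φx.fun_add d_ψ).fun_pow 2).const_mul K)).fun_add
      ((d_ψx.fun_pow 2).const_mul b)).fun_add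
      ((d_wt.fun_pow 2).const_mul ρ₃)).fun_add
      ((d_wx.fun_pow 2).const_mul δ))
    unfold eInt hInt
    refine total.congr_deriv ?_
    ring
  -- differentiate under the integral sign
  have key : HasDerivAt (fun τ => ∫ x in (0:ℝ)..L, eInt ρ α lm ρ₁ K b ρ₃ δ u φ ψ w x τ)
      (∫ x in (0:ℝ)..L, 2 * hInt ρ α lm ρ₁ K b ρ₃ δ u φ ψ w x t) t :=
    hasDerivAt_param_integral cE (continuous_const.mul cH) hd t
  have keyE : HasDerivAt (energy L ρ α lm ρ₁ K b ρ₃ δ u φ ψ w)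
      ((1/2) * ∫ x in (0:ℝ)..L, 2 * hInt ρ α lm ρ₁ K b ρ₃ δ u φ ψ w x t) t := by
    have hEeq : energy L ρ α lm ρ₁ K b ρ₃ δ u φ ψ w
        = fun τ => (1/2) * ∫ x in (0:ℝ)..L, eInt ρ α lm ρ₁ K b ρ₃ δ u φ ψ w x τ := rfl
    rw [hEeq]
    exact key.const_mul (1/2)
  -- pointwise identity on the open interval
  have hpoint : ∀ x ∈ Ioo (0:ℝ) L,
      hInt ρ α lm ρ₁ K b ρ₃ δ u φ ψ w x t
        = (-(μ * (pdt u x t)^2) - γ * (pdt φ x t)^2 - κ * (pdx (pdt w) x t)^2)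
          + fluxDx α K b δ κ β u φ ψ w x t := by
    intro x hx
    have e1 := eq1 x hx t ht
    have e2 := eq2 x hx t ht
    have e3 := eq3 x hx t ht
    have e4 := eq4 x hx t ht
    rw [pdx_add (hφx.of_le one_le_two) (hψ3.of_le (by norm_num)) x t] at e2
    have c1 := pdt_pdx_comm (hu3.of_le (by norm_num)) x t
    have c2 := pdt_pdx_comm (hφ3.of_le (by norm_num)) x t
    have c3 := pdt_pdx_comm (hψ3.of_le (by norm_num)) x t
    have c4 := pdt_pdx_comm (hw3.of_le (by norm_num)) x t
    unfold hInt fluxDx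
    rw [c1, c2, c3, c4]
    linear_combination (pdt u x t) * e1 + (pdt φ x t) * e2 + (pdt ψ x t) * e3 + (pdt w x t) * e4
  -- interval-integrability of the relevant slices
  have slice : ∀ {f : ℝ → ℝ → ℝ}, Continuous (fun p : ℝ × ℝ => f p.1 p.2)
      → Continuous fun x => f x t := fun hf =>
    hf.comp (continuous_id.prodMk continuous_const)
  have iut2 : IntervalIntegrable (fun x => (pdt u x t)^2) volume 0 L :=
    ((slice cut).pow 2).intervalIntegrable 0 L
  have iφt2 : IntervalIntegrable (fun x => (pdt φ x t)^2) volume 0 L :=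
    ((slice cφt).pow 2).intervalIntegrable 0 L
  have iwxt2 : IntervalIntegrable (fun x => (pdx (pdt w) x t)^2) volume 0 L :=
    ((slice cwxt).pow 2).intervalIntegrable 0 L
  have cfluxDx : Continuous fun x => fluxDx α K b δ κ β u φ ψ w x t := by
    unfold fluxDx
    exact ((((((((((((continuous_const.mul (slice cuxx)).mul (slice cut)).add
      ((continuous_const.mul (slice cux)).mul (slice cuxt))).add
      ((continuous_const.mul ((slice cφxx).add (slice cψx))).mul (slice cφt))).add
      ((continuous_const.mul ((slice cφx).add (slice cψ))).mul (slice cφxt))).add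
      ((continuous_const.mul (slice cψxx)).mul (slice cψt))).add
      ((continuous_const.mul (slice cψx)).mul (slice cψxt))).add
      ((continuous_const.mul (slice cwxx)).mul (slice cwt))).add
      ((continuous_const.mul (slice cwx)).mul (slice cwxt))).add
      ((continuous_const.mul (slice cwxxt)).mul (slice cwt))).add
      (continuous_const.mul ((slice cwxt).pow 2))).sub
      ((continuous_const.mul (slice cφxt)).mul (slice cwt))).sub
      ((continuous_const.mul (slice cφt)).mul (slice cwxt))
  have ifluxDx : IntervalIntegrable (fun x => fluxDx α K b δ κ β u φ ψ w x t) volume 0 L :=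
    cfluxDx.intervalIntegrable 0 L
  -- FTC for the flux
  have fluxFTC : (∫ x in (0:ℝ)..L, fluxDx α K b δ κ β u φ ψ w x t)
      = flux α K b δ κ β u φ ψ w L t - flux α K b δ κ β u φ ψ w 0 t := by
    apply intervalIntegral.integral_eq_sub_of_hasDerivAt _ ifluxDx
    intro x _
    have d_ux := hasDerivAt_pdx (hux.of_le one_le_two) x t
    have d_ut := hasDerivAt_pdx (hut.of_le one_le_two) x t
    have d_φx := hasDerivAt_pdx (hφx.of_le one_le_two) x t
    have d_φt := hasDerivAt_pdx (hφt.of_le one_le_two) x t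
    have d_ψ := hasDerivAt_pdx (hψ3.of_le (by norm_num)) x t
    have d_ψx := hasDerivAt_pdx (hψx.of_le one_le_two) x t
    have d_ψt := hasDerivAt_pdx (hψt.of_le one_le_two) x t
    have d_wx := hasDerivAt_pdx (hwx.of_le one_le_two) x t
    have d_wt := hasDerivAt_pdx (hwt.of_le one_le_two) x t
    have d_wxt := hasDerivAt_pdx hwxt x t
    have total := ((((((d_ux.const_mul α).fun_mul d_ut).fun_add
      (((d_φx.fun_add d_ψ).const_mul K).fun_mul d_φt)).fun_add
      ((d_ψx.const_mul b).fun_mul d_ψt)).fun_add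
      ((d_wx.const_mul δ).fun_mul d_wt)).fun_add
      ((d_wxt.const_mul κ).fun_mul d_wt)).fun_sub
      ((d_φt.const_mul β).fun_mul d_wt)
    unfold flux fluxDx
    convert total using 1
    ring
  -- boundary terms vanish
  have bzero : ∀ c : ℝ, (∀ s : ℝ, 0 ≤ s → u c s = 0 ∧ φ c s = 0 ∧ ψ c s = 0 ∧ w c s = 0)
      → flux α K b δ κ β u φ ψ w c t = 0 := by
    intro c hc
    have h1 : pdt u c t = 0 := pdt_boundary_zero ht fun s hs => (hc s hs).1
    have h2 : pdt φ c t = 0 := pdt_boundary_zero ht fun s hs => (hc s hs).2.1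
    have h3 : pdt ψ c t = 0 := pdt_boundary_zero ht fun s hs => (hc s hs).2.2.1
    have h4 : pdt w c t = 0 := pdt_boundary_zero ht fun s hs => (hc s hs).2.2.2
    unfold flux
    rw [h1, h2, h3, h4]
    ring
  have bL : flux α K b δ κ β u φ ψ w L t = 0 :=
    bzero L fun s hs => ⟨(bc s hs).2.1, (bc s hs).2.2.2.1, (bc s hs).2.2.2.2.2.1,
      (bc s hs).2.2.2.2.2.2.2⟩
  have b0 : flux α K b δ κ β u φ ψ w 0 t = 0 :=
    bzero 0 fun s hs => ⟨(bc s hs).1, (bc s hs).2.2.1, (bc s hs).2.2.2.2.1,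
      (bc s hs).2.2.2.2.2.2.1⟩
  -- a.e. congruence on the interval
  have hcongr : (∫ x in (0:ℝ)..L, hInt ρ α lm ρ₁ K b ρ₃ δ u φ ψ w x t)
      = ∫ x in (0:ℝ)..L,
          ((-(μ * (pdt u x t)^2) - γ * (pdt φ x t)^2 - κ * (pdx (pdt w) x t)^2)
            + fluxDx α K b δ κ β u φ ψ w x t) := by
    apply intervalIntegral.integral_congr_ae
    have hne : ∀ᵐ x : ℝ ∂volume, x ≠ L := by
      refine MeasureTheory.ae_iff.mpr ?_
      simpa [not_not, Set.setOf_eq_eq_singleton] using measure_singleton L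
    filter_upwards [hne] with x hxne hxI
    rw [uIoc_of_le hL.le] at hxI
    exact hpoint x ⟨hxI.1, lt_of_le_of_ne hxI.2 hxne⟩
  -- put everything together
  have isum : IntervalIntegrable
      (fun x => -(μ * (pdt u x t)^2) - γ * (pdt φ x t)^2 - κ * (pdx (pdt w) x t)^2)
      volume 0 L := (((iut2.const_mul μ).neg.sub (iφt2.const_mul γ)).sub (iwxt2.const_mul κ))
  have hIeq : (∫ x in (0:ℝ)..L, hInt ρ α lm ρ₁ K b ρ₃ δ u φ ψ w x t)
      = -(μ * ∫ x in (0:ℝ)..L, (pdt u x t)^2)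
        - γ * (∫ x in (0:ℝ)..L, (pdt φ x t)^2)
        - κ * (∫ x in (0:ℝ)..L, (pdx (pdt w) x t)^2) := by
    rw [hcongr, intervalIntegral.integral_add isum ifluxDx, fluxFTC, bL, b0]
    have B : (∫ x in (0:ℝ)..L,
        (-(μ * (pdt u x t)^2) - γ * (pdt φ x t)^2 - κ * (pdx (pdt w) x t)^2))
        = ∫ x in (0:ℝ)..L, ((-μ) * (pdt u x t)^2
            + ((-γ) * (pdt φ x t)^2 + (-κ) * (pdx (pdt w) x t)^2)) :=
      intervalIntegral.integral_congr fun x _ => by ring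
    rw [B, intervalIntegral.integral_add (iut2.const_mul (-μ))
        ((iφt2.const_mul (-γ)).add (iwxt2.const_mul (-κ))),
      intervalIntegral.integral_add (iφt2.const_mul (-γ)) (iwxt2.const_mul (-κ)),
      intervalIntegral.integral_const_mul, intervalIntegral.integral_const_mul,
      intervalIntegral.integral_const_mul]
    ring
  constructor
  · have : (1/2 : ℝ) * (∫ x in (0:ℝ)..L, 2 * hInt ρ α lm ρ₁ K b ρ₃ δ u φ ψ w x t)
        = -(μ * ∫ x in (0:ℝ)..L, (pdt u x t)^2)
          - γ * (∫ x in (0:ℝ)..L, (pdt φ x t)^2)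
          - κ * (∫ x in (0:ℝ)..L, (pdx (pdt w) x t)^2) := by
      rw [intervalIntegral.integral_const_mul, hIeq]; ring
    rw [← this]
    exact keyE
  · have h1 : 0 ≤ ∫ x in (0:ℝ)..L, (pdt u x t)^2 :=
      intervalIntegral.integral_nonneg hL.le fun x _ => sq_nonneg _
    have h2 : 0 ≤ ∫ x in (0:ℝ)..L, (pdt φ x t)^2 :=
      intervalIntegral.integral_nonneg hL.le fun x _ => sq_nonneg _
    have h3 : 0 ≤ ∫ x in (0:ℝ)..L, (pdx (pdt w) x t)^2 :=
      intervalIntegral.integral_nonneg hL.le fun x _ => sq_nonneg _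
    nlinarith [mul_nonneg hμ.le h1, mul_nonneg hγ.le h2, mul_nonneg hκ.le h3]
end
end

section
/- Let (u, φ, ψ, w) be a classical solution of the suspension-bridge Shear beam system in thermoelasticity of type III. Then the energy E is nonincreasing: for all 0 ≤ s ≤ t one has E(t) ≤ E(s); in particular E(t) ≤ E(0) for all t ≥ 0. -/
open MeasureTheory Set

noncomputable section

namespace EnergyAux

/-- Uncurry. -/
def UC (f : ℝ → ℝ → ℝ) : ℝ × ℝ → ℝ := fun p => f p.1 p.2

/-- Partial derivative in the second coordinate, as directional fderiv. -/
def DT (F : ℝ × ℝ → ℝ) : ℝ × ℝ → ℝ := fun p => fderiv ℝ F p (0, 1)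

/-- Partial derivative in the first coordinate, as directional fderiv. -/
def DX (F : ℝ × ℝ → ℝ) : ℝ × ℝ → ℝ := fun p => fderiv ℝ F p (1, 0)

lemma sliceT {F : ℝ × ℝ → ℝ} {x t : ℝ} (h : DifferentiableAt ℝ F (x, t)) :
    HasDerivAt (fun s => F (x, s)) (DT F (x, t)) t := by
  have h1 : HasDerivAt (fun s : ℝ => ((x, s) : ℝ × ℝ)) (((0:ℝ), (1:ℝ)) : ℝ × ℝ) t :=
    (hasDerivAt_const t x).prodMk (hasDerivAt_id t)
  exact h.hasFDerivAt.comp_hasDerivAt t h1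

lemma sliceX {F : ℝ × ℝ → ℝ} {x t : ℝ} (h : DifferentiableAt ℝ F (x, t)) :
    HasDerivAt (fun y => F (y, t)) (DX F (x, t)) x := by
  have h1 : HasDerivAt (fun y : ℝ => ((y, t) : ℝ × ℝ)) (((1:ℝ), (0:ℝ)) : ℝ × ℝ) x :=
    (hasDerivAt_id x).prodMk (hasDerivAt_const x t)
  exact h.hasFDerivAt.comp_hasDerivAt x h1

lemma contDiff_DT {n m : WithTop ℕ∞} {F : ℝ × ℝ → ℝ} (h : ContDiff ℝ n F) (hm : m + 1 ≤ n) :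
    ContDiff ℝ m (DT F) :=
  (h.fderiv_right hm).clm_apply contDiff_const

lemma contDiff_DX {n m : WithTop ℕ∞} {F : ℝ × ℝ → ℝ} (h : ContDiff ℝ n F) (hm : m + 1 ≤ n) :
    ContDiff ℝ m (DX F) :=
  (h.fderiv_right hm).clm_apply contDiff_const

lemma DT_DX_symm {F : ℝ × ℝ → ℝ} (h : ContDiff ℝ 2 F) (p : ℝ × ℝ) :
    DT (DX F) p = DX (DT F) p := by
  have hd : Differentiable ℝ (fderiv ℝ F) :=
    (h.fderiv_right (m := 1) (by norm_num)).differentiable (by norm_num)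
  have hsym := second_derivative_symmetric
    (fun y => (h.differentiable (by norm_num) y).hasFDerivAt) (hd p).hasFDerivAt
    ((1:ℝ), (0:ℝ)) ((0:ℝ), (1:ℝ))
  unfold DT DX
  rw [fderiv_clm_apply (hd _) (differentiableAt_const _),
    fderiv_clm_apply (hd _) (differentiableAt_const _)]
  simp [hsym]

lemma hasDerivAt_parint {F G : ℝ × ℝ → ℝ} (hF : Continuous F) (hG : Continuous G)
    (hd : ∀ x t : ℝ, HasDerivAt (fun s => F (x, s)) (G (x, t)) t) (a b t₀ : ℝ) :
    HasDerivAt (fun t => ∫ x in a..b, F (x, t)) (∫ x in a..b, G (x, t₀)) t₀ := by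
  obtain ⟨M, hM⟩ : ∃ M, ∀ p ∈ (uIcc a b) ×ˢ (Icc (t₀ - 1) (t₀ + 1)), ‖G p‖ ≤ M :=
    (isCompact_uIcc.prod isCompact_Icc).exists_bound_of_continuousOn hG.continuousOn
  have h := intervalIntegral.hasDerivAt_integral_of_dominated_loc_of_deriv_le
    (F := fun t x => F (x, t)) (F' := fun t x => G (x, t)) (x₀ := t₀)
    (bound := fun _ => M) (a := a) (b := b) (μ := volume) (s := Metric.ball t₀ 1) (Metric.ball_mem_nhds t₀ one_pos)
    (Filter.Eventually.of_forall fun t =>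
      (hF.comp (continuous_id.prodMk continuous_const)).aestronglyMeasurable)
    ((hF.comp (continuous_id.prodMk continuous_const)).intervalIntegrable a b)
    ((hG.comp (continuous_id.prodMk continuous_const)).aestronglyMeasurable)
    (Filter.Eventually.of_forall fun x hx t ht => hM (x, t)
      ⟨uIoc_subset_uIcc hx, by
        have := abs_lt.1 (by simpa [Real.dist_eq] using Metric.mem_ball.1 ht)
        constructor <;> linarith [this.1, this.2]⟩)
    (intervalIntegrable_const)
    (Filter.Eventually.of_forall fun x _ t _ => hd x t)
  exact h.2

lemma pdt_eq' {f : ℝ → ℝ → ℝ} {F : ℝ × ℝ → ℝ} (hf : UC f = F) (h : Differentiable ℝ F)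
    (x t : ℝ) : pdt f x t = DT F (x, t) := by
  unfold pdt
  rw [show (fun s => f x s) = fun s => F (x, s) from funext fun s => congrFun hf (x, s)]
  exact (sliceT (h _)).deriv

lemma pdx_eq' {f : ℝ → ℝ → ℝ} {F : ℝ × ℝ → ℝ} (hf : UC f = F) (h : Differentiable ℝ F)
    (x t : ℝ) : pdx f x t = DX F (x, t) := by
  unfold pdx
  rw [show (fun y => f y t) = fun y => F (y, t) from funext fun y => congrFun hf (y, t)]
  exact (sliceX (h _)).deriv

lemma UC_pdt' {f : ℝ → ℝ → ℝ} {F : ℝ × ℝ → ℝ} (hf : UC f = F) (h : Differentiable ℝ F) :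
    UC (pdt f) = DT F :=
  funext fun p => by simpa [UC] using pdt_eq' hf h p.1 p.2

lemma UC_pdx' {f : ℝ → ℝ → ℝ} {F : ℝ × ℝ → ℝ} (hf : UC f = F) (h : Differentiable ℝ F) :
    UC (pdx f) = DX F :=
  funext fun p => by simpa [UC] using pdx_eq' hf h p.1 p.2

lemma DT_boundary {f : ℝ → ℝ → ℝ} (h : Differentiable ℝ (UC f)) {x₀ t : ℝ} (ht : 0 < t)
    (hb : ∀ s, 0 ≤ s → f x₀ s = 0) : DT (UC f) (x₀, t) = 0 := by
  have h1 : deriv (fun s => UC f (x₀, s)) t = DT (UC f) (x₀, t) :=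
    (sliceT (h _)).deriv
  rw [← h1]
  have heq : (fun s => UC f (x₀, s)) =ᶠ[nhds t] fun _ => (0:ℝ) := by
    filter_upwards [Ioi_mem_nhds ht] with s hs
    exact hb s (le_of_lt hs)
  rw [heq.deriv_eq]
  exact deriv_const t 0

lemma DX_add {F G : ℝ × ℝ → ℝ} (hF : Differentiable ℝ F) (hG : Differentiable ℝ G) (p : ℝ × ℝ) :
    DX (fun q => F q + G q) p = DX F p + DX G p := by
  unfold DX
  rw [fderiv_fun_add (hF _) (hG _)]
  rfl

end EnergyAux
namespace EnergyAux

variable (ρ α lm μ ρ₁ K γ b ρ₃ δ κ β : ℝ) (U Φ Ψ W : ℝ × ℝ → ℝ)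

/-- The energy integrand. -/
def Econt : ℝ × ℝ → ℝ := fun p =>
  ρ * (DT U p)^2 + α * (DX U p)^2 + lm * (Φ p - U p)^2 + ρ₁ * (DT Φ p)^2
    + K * (DX Φ p + Ψ p)^2 + b * (DX Ψ p)^2 + ρ₃ * (DT W p)^2 + δ * (DX W p)^2

/-- The time derivative of the energy integrand. -/
def Ederiv : ℝ × ℝ → ℝ := fun p =>
  2 * (ρ * DT U p * DT (DT U) p + α * DX U p * DT (DX U) p
    + lm * (Φ p - U p) * (DT Φ p - DT U p) + ρ₁ * DT Φ p * DT (DT Φ) p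
    + K * (DX Φ p + Ψ p) * (DT (DX Φ) p + DT Ψ p) + b * DX Ψ p * DT (DX Ψ) p
    + ρ₃ * DT W p * DT (DT W) p + δ * DX W p * DT (DX W) p)

/-- The flux function. -/
def Gfun : ℝ × ℝ → ℝ := fun p =>
  α * (DX U p * DT U p) + K * ((DX Φ p + Ψ p) * DT Φ p) + b * (DX Ψ p * DT Ψ p)
    + δ * (DX W p * DT W p) + κ * (DX (DT W) p * DT W p) - β * (DT Φ p * DT W p)

/-- The dissipation. -/
def Dissf : ℝ × ℝ → ℝ := fun p =>
  2 * (μ * (DT U p)^2 + γ * (DT Φ p)^2 + κ * (DX (DT W) p)^2)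

variable {U Φ Ψ W}
variable (hU : ContDiff ℝ 3 U) (hΦ : ContDiff ℝ 3 Φ) (hΨ : ContDiff ℝ 3 Ψ)
  (hW : ContDiff ℝ 3 W)

section
include hU hΦ hΨ hW

lemma cont_Econt : Continuous (Econt ρ α lm ρ₁ K b ρ₃ δ U Φ Ψ W) := by
  have h1 := (contDiff_DT hU (show (2:WithTop ℕ∞)+1 ≤ 3 by norm_num)).continuous
  have h2 := (contDiff_DX hU (show (2:WithTop ℕ∞)+1 ≤ 3 by norm_num)).continuous
  have h3 := (contDiff_DT hΦ (show (2:WithTop ℕ∞)+1 ≤ 3 by norm_num)).continuous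
  have h4 := (contDiff_DX hΦ (show (2:WithTop ℕ∞)+1 ≤ 3 by norm_num)).continuous
  have h5 := (contDiff_DT hΨ (show (2:WithTop ℕ∞)+1 ≤ 3 by norm_num)).continuous
  have h6 := (contDiff_DX hΨ (show (2:WithTop ℕ∞)+1 ≤ 3 by norm_num)).continuous
  have h7 := (contDiff_DT hW (show (2:WithTop ℕ∞)+1 ≤ 3 by norm_num)).continuous
  have h8 := (contDiff_DX hW (show (2:WithTop ℕ∞)+1 ≤ 3 by norm_num)).continuous
  have h9 := hU.continuous
  have h10 := hΦ.continuous
  have h11 := hΨ.continuous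
  unfold Econt
  fun_prop

lemma cont_Ederiv : Continuous (Ederiv ρ α lm ρ₁ K b ρ₃ δ U Φ Ψ W) := by
  have c3 : ((2:WithTop ℕ∞)+1 ≤ 3) := by norm_num
  have c2 : ((1:WithTop ℕ∞)+1 ≤ 2) := by norm_num
  have h1 := (contDiff_DT hU c3).continuous
  have h2 := (contDiff_DX hU c3).continuous
  have h3 := (contDiff_DT hΦ c3).continuous
  have h4 := (contDiff_DX hΦ c3).continuous
  have h5 := (contDiff_DT hΨ c3).continuous
  have h6 := (contDiff_DX hΨ c3).continuous
  have h7 := (contDiff_DT hW c3).continuous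
  have h8 := (contDiff_DX hW c3).continuous
  have g1 := (contDiff_DT (contDiff_DT hU c3) c2).continuous
  have g2 := (contDiff_DT (contDiff_DX hU c3) c2).continuous
  have g3 := (contDiff_DT (contDiff_DT hΦ c3) c2).continuous
  have g4 := (contDiff_DT (contDiff_DX hΦ c3) c2).continuous
  have g5 := (contDiff_DT (contDiff_DX hΨ c3) c2).continuous
  have g6 := (contDiff_DT (contDiff_DT hW c3) c2).continuous
  have g7 := (contDiff_DT (contDiff_DX hW c3) c2).continuous
  have h9 := hU.continuous
  have h10 := hΦ.continuous
  have h11 := hΨ.continuous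
  unfold Ederiv
  fun_prop

lemma contDiff_Gfun : ContDiff ℝ 1 (Gfun α K b δ κ β U Φ Ψ W) := by
  have c3 : ((2:WithTop ℕ∞)+1 ≤ 3) := by norm_num
  have c2 : ((1:WithTop ℕ∞)+1 ≤ 2) := by norm_num
  have h1 := (contDiff_DT hU c3).of_le (show (1:WithTop ℕ∞) ≤ 2 by norm_num)
  have h2 := (contDiff_DX hU c3).of_le (show (1:WithTop ℕ∞) ≤ 2 by norm_num)
  have h3 := (contDiff_DT hΦ c3).of_le (show (1:WithTop ℕ∞) ≤ 2 by norm_num)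
  have h4 := (contDiff_DX hΦ c3).of_le (show (1:WithTop ℕ∞) ≤ 2 by norm_num)
  have h5 := (contDiff_DT hΨ c3).of_le (show (1:WithTop ℕ∞) ≤ 2 by norm_num)
  have h6 := (contDiff_DX hΨ c3).of_le (show (1:WithTop ℕ∞) ≤ 2 by norm_num)
  have h7 := (contDiff_DT hW c3).of_le (show (1:WithTop ℕ∞) ≤ 2 by norm_num)
  have h8 := (contDiff_DX hW c3).of_le (show (1:WithTop ℕ∞) ≤ 2 by norm_num)
  have g1 := contDiff_DX (contDiff_DT hW c3) c2
  have h11 := hΨ.of_le (show (1:WithTop ℕ∞) ≤ 3 by norm_num)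
  unfold Gfun
  fun_prop

lemma cont_Dissf : Continuous (Dissf μ γ κ U Φ W) := by
  have c3 : ((2:WithTop ℕ∞)+1 ≤ 3) := by norm_num
  have c2 : ((1:WithTop ℕ∞)+1 ≤ 2) := by norm_num
  have h1 := (contDiff_DT hU c3).continuous
  have h3 := (contDiff_DT hΦ c3).continuous
  have g1 := (contDiff_DX (contDiff_DT hW c3) c2).continuous
  unfold Dissf
  fun_prop

lemma hasDerivAt_Econt_slice (x t : ℝ) :
    HasDerivAt (fun s => Econt ρ α lm ρ₁ K b ρ₃ δ U Φ Ψ W (x, s))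
      (Ederiv ρ α lm ρ₁ K b ρ₃ δ U Φ Ψ W (x, t)) t := by
  have c3 : ((2:WithTop ℕ∞)+1 ≤ 3) := by norm_num
  have d1 : Differentiable ℝ (DT U) := (contDiff_DT hU c3).differentiable (by norm_num)
  have d2 : Differentiable ℝ (DX U) := (contDiff_DX hU c3).differentiable (by norm_num)
  have d3 : Differentiable ℝ (DT Φ) := (contDiff_DT hΦ c3).differentiable (by norm_num)
  have d4 : Differentiable ℝ (DX Φ) := (contDiff_DX hΦ c3).differentiable (by norm_num)
  have d5 : Differentiable ℝ (DT Ψ) := (contDiff_DT hΨ c3).differentiable (by norm_num)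
  have d6 : Differentiable ℝ (DX Ψ) := (contDiff_DX hΨ c3).differentiable (by norm_num)
  have d7 : Differentiable ℝ (DT W) := (contDiff_DT hW c3).differentiable (by norm_num)
  have d8 : Differentiable ℝ (DX W) := (contDiff_DX hW c3).differentiable (by norm_num)
  have dU : Differentiable ℝ U := hU.differentiable (by norm_num)
  have dΦ : Differentiable ℝ Φ := hΦ.differentiable (by norm_num)
  have dΨ : Differentiable ℝ Ψ := hΨ.differentiable (by norm_num)
  have s1 := sliceT (d1 (x, t))
  have s2 := sliceT (d2 (x, t))
  have s3 := sliceT (d3 (x, t))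
  have s4 := sliceT (d4 (x, t))
  have s5 := sliceT (d5 (x, t))
  have s6 := sliceT (d6 (x, t))
  have s7 := sliceT (d7 (x, t))
  have s8 := sliceT (d8 (x, t))
  have sU := sliceT (dU (x, t))
  have sΦ := sliceT (dΦ (x, t))
  have sΨ := sliceT (dΨ (x, t))
  have H := ((((((((s1.pow 2).const_mul ρ).add ((s2.pow 2).const_mul α)).add
    ((((sΦ.sub sU).pow 2)).const_mul lm)).add ((s3.pow 2).const_mul ρ₁)).add
    ((((s4.add sΨ).pow 2)).const_mul K)).add ((s6.pow 2).const_mul b)).add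
    ((s7.pow 2).const_mul ρ₃)).add ((s8.pow 2).const_mul δ)
  have hval : Ederiv ρ α lm ρ₁ K b ρ₃ δ U Φ Ψ W (x, t) =
      ρ * (↑2 * DT U (x, t) ^ (2-1) * DT (DT U) (x, t))
      + α * (↑2 * DX U (x, t) ^ (2-1) * DT (DX U) (x, t))
      + lm * (↑2 * (Φ (x, t) - U (x, t)) ^ (2-1) * (DT Φ (x, t) - DT U (x, t)))
      + ρ₁ * (↑2 * DT Φ (x, t) ^ (2-1) * DT (DT Φ) (x, t))
      + K * (↑2 * (DX Φ (x, t) + Ψ (x, t)) ^ (2-1) * (DT (DX Φ) (x, t) + DT Ψ (x, t)))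
      + b * (↑2 * DX Ψ (x, t) ^ (2-1) * DT (DX Ψ) (x, t))
      + ρ₃ * (↑2 * DT W (x, t) ^ (2-1) * DT (DT W) (x, t))
      + δ * (↑2 * DX W (x, t) ^ (2-1) * DT (DX W) (x, t)) := by
    unfold Ederiv
    push_cast
    ring
  rw [hval]
  exact H

end
end EnergyAux
namespace EnergyAux

variable (α K b δ κ β : ℝ) {U Φ Ψ W : ℝ × ℝ → ℝ}
variable (hU : ContDiff ℝ 3 U) (hΦ : ContDiff ℝ 3 Φ) (hΨ : ContDiff ℝ 3 Ψ)
  (hW : ContDiff ℝ 3 W)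

include hU hΦ hΨ hW in
lemma DX_Gfun (x t : ℝ) :
    DX (Gfun α K b δ κ β U Φ Ψ W) (x, t) =
      α * (DX (DX U) (x,t) * DT U (x,t) + DX U (x,t) * DX (DT U) (x,t))
      + K * ((DX (DX Φ) (x,t) + DX Ψ (x,t)) * DT Φ (x,t)
          + (DX Φ (x,t) + Ψ (x,t)) * DX (DT Φ) (x,t))
      + b * (DX (DX Ψ) (x,t) * DT Ψ (x,t) + DX Ψ (x,t) * DX (DT Ψ) (x,t))
      + δ * (DX (DX W) (x,t) * DT W (x,t) + DX W (x,t) * DX (DT W) (x,t))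
      + κ * (DX (DX (DT W)) (x,t) * DT W (x,t) + DX (DT W) (x,t) * DX (DT W) (x,t))
      - β * (DX (DT Φ) (x,t) * DT W (x,t) + DT Φ (x,t) * DX (DT W) (x,t)) := by
  have c3 : ((2:WithTop ℕ∞)+1 ≤ 3) := by norm_num
  have c2 : ((1:WithTop ℕ∞)+1 ≤ 2) := by norm_num
  have d1 : Differentiable ℝ (DT U) := (contDiff_DT hU c3).differentiable (by norm_num)
  have d2 : Differentiable ℝ (DX U) := (contDiff_DX hU c3).differentiable (by norm_num)
  have d3 : Differentiable ℝ (DT Φ) := (contDiff_DT hΦ c3).differentiable (by norm_num)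
  have d4 : Differentiable ℝ (DX Φ) := (contDiff_DX hΦ c3).differentiable (by norm_num)
  have d5 : Differentiable ℝ (DT Ψ) := (contDiff_DT hΨ c3).differentiable (by norm_num)
  have d6 : Differentiable ℝ (DX Ψ) := (contDiff_DX hΨ c3).differentiable (by norm_num)
  have d7 : Differentiable ℝ (DT W) := (contDiff_DT hW c3).differentiable (by norm_num)
  have d8 : Differentiable ℝ (DX W) := (contDiff_DX hW c3).differentiable (by norm_num)
  have d9 : Differentiable ℝ (DX (DT W)) :=
    (contDiff_DX (contDiff_DT hW c3) c2).differentiable (by norm_num)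
  have dΨ : Differentiable ℝ Ψ := hΨ.differentiable (by norm_num)
  have s1 := sliceX (d1 (x, t))
  have s2 := sliceX (d2 (x, t))
  have s3 := sliceX (d3 (x, t))
  have s4 := sliceX (d4 (x, t))
  have s5 := sliceX (d5 (x, t))
  have s6 := sliceX (d6 (x, t))
  have s7 := sliceX (d7 (x, t))
  have s8 := sliceX (d8 (x, t))
  have s9 := sliceX (d9 (x, t))
  have sΨ := sliceX (dΨ (x, t))
  have H := ((((((s2.mul s1).const_mul α).add (((s4.add sΨ).mul s3).const_mul K)).add
    ((s6.mul s5).const_mul b)).add ((s8.mul s7).const_mul δ)).add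
    ((s9.mul s7).const_mul κ)).sub ((s3.mul s7).const_mul β)
  have h2 := sliceX (((contDiff_Gfun α K b δ κ β hU hΦ hΨ hW).differentiable one_ne_zero) (x, t))
  exact h2.unique H

end EnergyAux
open EnergyAux

/-- the energy is nonincreasing. -/
theorem energy_nonincreasing
    {L ρ α lm μ ρ₁ K γ b ρ₃ δ κ β : ℝ}
    (hL : 0 < L) (hρ : 0 < ρ) (hα : 0 < α) (hlm : 0 < lm) (hμ : 0 < μ)
    (hρ₁ : 0 < ρ₁) (hK : 0 < K) (hγ : 0 < γ) (hb : 0 < b) (hρ₃ : 0 < ρ₃)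
    (hδ : 0 < δ) (hκ : 0 < κ) (hβ : β ≠ 0)
    {u φ ψ w : ℝ → ℝ → ℝ}
    (hsol : IsShearSolution L ρ α lm μ ρ₁ K γ b ρ₃ δ κ β u φ ψ w) :
    (∀ s t : ℝ, 0 ≤ s → s ≤ t →
      energy L ρ α lm ρ₁ K b ρ₃ δ u φ ψ w t ≤ energy L ρ α lm ρ₁ K b ρ₃ δ u φ ψ w s) ∧
    (∀ t : ℝ, 0 ≤ t →
      energy L ρ α lm ρ₁ K b ρ₃ δ u φ ψ w t ≤ energy L ρ α lm ρ₁ K b ρ₃ δ u φ ψ w 0) := by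
  obtain ⟨hu3, hφ3, hψ3, hw3, heq1, heq2, heq3, heq4, hbc⟩ := hsol
  have hU : ContDiff ℝ 3 (UC u) := hu3
  have hΦ : ContDiff ℝ 3 (UC φ) := hφ3
  have hΨ : ContDiff ℝ 3 (UC ψ) := hψ3
  have hW : ContDiff ℝ 3 (UC w) := hw3
  have c3 : ((2:WithTop ℕ∞)+1 ≤ 3) := by norm_num
  have c2 : ((1:WithTop ℕ∞)+1 ≤ 2) := by norm_num
  have dU : Differentiable ℝ (UC u) := hU.differentiable (by norm_num)
  have dΦ : Differentiable ℝ (UC φ) := hΦ.differentiable (by norm_num)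
  have dΨ : Differentiable ℝ (UC ψ) := hΨ.differentiable (by norm_num)
  have dW : Differentiable ℝ (UC w) := hW.differentiable (by norm_num)
  have dUt : Differentiable ℝ (DT (UC u)) := (contDiff_DT hU c3).differentiable (by norm_num)
  have dUx : Differentiable ℝ (DX (UC u)) := (contDiff_DX hU c3).differentiable (by norm_num)
  have dΦt : Differentiable ℝ (DT (UC φ)) := (contDiff_DT hΦ c3).differentiable (by norm_num)
  have dΦx : Differentiable ℝ (DX (UC φ)) := (contDiff_DX hΦ c3).differentiable (by norm_num)
  have dΨx : Differentiable ℝ (DX (UC ψ)) := (contDiff_DX hΨ c3).differentiable (by norm_num)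
  have dWt : Differentiable ℝ (DT (UC w)) := (contDiff_DT hW c3).differentiable (by norm_num)
  have dWx : Differentiable ℝ (DX (UC w)) := (contDiff_DX hW c3).differentiable (by norm_num)
  have dWtx : Differentiable ℝ (DX (DT (UC w))) :=
    (contDiff_DX (contDiff_DT hW c3) c2).differentiable (by norm_num)
  have hUut : UC (pdt u) = DT (UC u) := UC_pdt' rfl dU
  have hUux : UC (pdx u) = DX (UC u) := UC_pdx' rfl dU
  have hUφt : UC (pdt φ) = DT (UC φ) := UC_pdt' rfl dΦ
  have hUφx : UC (pdx φ) = DX (UC φ) := UC_pdx' rfl dΦ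
  have hUψx : UC (pdx ψ) = DX (UC ψ) := UC_pdx' rfl dΨ
  have hUwt : UC (pdt w) = DT (UC w) := UC_pdt' rfl dW
  have hUwx : UC (pdx w) = DX (UC w) := UC_pdx' rfl dW
  have hUwtx : UC (pdx (pdt w)) = DX (DT (UC w)) := UC_pdx' hUwt dWt
  -- energy in terms of Econt
  have hE : ∀ t : ℝ, energy L ρ α lm ρ₁ K b ρ₃ δ u φ ψ w t
      = (1/2) * ∫ x in (0:ℝ)..L,
          Econt ρ α lm ρ₁ K b ρ₃ δ (UC u) (UC φ) (UC ψ) (UC w) (x, t) := by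
    intro t
    unfold energy
    congr 1
    refine intervalIntegral.integral_congr fun x _ => ?_
    rw [pdt_eq' rfl dU, pdx_eq' rfl dU, pdt_eq' rfl dΦ, pdx_eq' rfl dΦ,
      pdx_eq' rfl dΨ, pdt_eq' rfl dW, pdx_eq' rfl dW]
    rfl
  -- derivative of the energy
  have hEd : ∀ t₀ : ℝ, HasDerivAt (fun t => energy L ρ α lm ρ₁ K b ρ₃ δ u φ ψ w t)
      ((1/2) * ∫ x in (0:ℝ)..L,
        Ederiv ρ α lm ρ₁ K b ρ₃ δ (UC u) (UC φ) (UC ψ) (UC w) (x, t₀)) t₀ := by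
    intro t₀
    have h := (hasDerivAt_parint (cont_Econt ρ α lm ρ₁ K b ρ₃ δ hU hΦ hΨ hW)
      (cont_Ederiv ρ α lm ρ₁ K b ρ₃ δ hU hΦ hΨ hW)
      (hasDerivAt_Econt_slice ρ α lm ρ₁ K b ρ₃ δ hU hΦ hΨ hW) 0 L t₀).const_mul (1/2 : ℝ)
    have hfun : (fun t => energy L ρ α lm ρ₁ K b ρ₃ δ u φ ψ w t)
        = fun t => (1/2) * ∫ x in (0:ℝ)..L,
            Econt ρ α lm ρ₁ K b ρ₃ δ (UC u) (UC φ) (UC ψ) (UC w) (x, t) := funext hE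
    rw [hfun]
    exact h
  -- pointwise identity on the interior
  have hpoint : ∀ x ∈ Ioo (0:ℝ) L, ∀ t : ℝ, 0 < t →
      Ederiv ρ α lm ρ₁ K b ρ₃ δ (UC u) (UC φ) (UC ψ) (UC w) (x, t)
        = 2 * DX (Gfun α K b δ κ β (UC u) (UC φ) (UC ψ) (UC w)) (x, t)
          - Dissf μ γ κ (UC u) (UC φ) (UC w) (x, t) := by
    intro x hx t ht
    have e1 : ρ * DT (DT (UC u)) (x,t) - α * DX (DX (UC u)) (x,t)
        - lm * (UC φ (x,t) - UC u (x,t)) + μ * DT (UC u) (x,t) = 0 := by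
      have h := heq1 x hx t ht
      rw [pdt_eq' hUut dUt, pdx_eq' hUux dUx, pdt_eq' rfl dU] at h
      exact h
    have hUsum : UC (fun y s => pdx φ y s + ψ y s) = fun p => DX (UC φ) p + UC ψ p := by
      funext p
      show pdx φ p.1 p.2 + ψ p.1 p.2 = _
      rw [pdx_eq' rfl dΦ]
      rfl
    have e2 : ρ₁ * DT (DT (UC φ)) (x,t)
        - K * (DX (DX (UC φ)) (x,t) + DX (UC ψ) (x,t))
        + lm * (UC φ (x,t) - UC u (x,t)) + γ * DT (UC φ) (x,t)
        + β * DX (DT (UC w)) (x,t) = 0 := by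
      have h := heq2 x hx t ht
      rw [pdt_eq' hUφt dΦt, pdx_eq' hUsum (dΦx.add dΨ),
        DX_add dΦx dΨ (x,t), pdt_eq' rfl dΦ, pdx_eq' hUwt dWt] at h
      exact h
    have e3 : -b * DX (DX (UC ψ)) (x,t) + K * (DX (UC φ) (x,t) + UC ψ (x,t)) = 0 := by
      have h := heq3 x hx t ht
      rw [pdx_eq' hUψx dΨx, pdx_eq' rfl dΦ] at h
      exact h
    have e4 : ρ₃ * DT (DT (UC w)) (x,t) - δ * DX (DX (UC w)) (x,t)
        + β * DX (DT (UC φ)) (x,t) - κ * DX (DX (DT (UC w))) (x,t) = 0 := by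
      have h := heq4 x hx t ht
      rw [pdt_eq' hUwt dWt, pdx_eq' hUwx dWx, pdx_eq' hUφt dΦt,
        pdx_eq' hUwtx dWtx] at h
      exact h
    have sy1 : DT (DX (UC u)) (x,t) = DX (DT (UC u)) (x,t) :=
      DT_DX_symm (hU.of_le (by norm_num)) (x,t)
    have sy2 : DT (DX (UC φ)) (x,t) = DX (DT (UC φ)) (x,t) :=
      DT_DX_symm (hΦ.of_le (by norm_num)) (x,t)
    have sy3 : DT (DX (UC ψ)) (x,t) = DX (DT (UC ψ)) (x,t) :=
      DT_DX_symm (hΨ.of_le (by norm_num)) (x,t)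
    have sy4 : DT (DX (UC w)) (x,t) = DX (DT (UC w)) (x,t) :=
      DT_DX_symm (hW.of_le (by norm_num)) (x,t)
    rw [DX_Gfun α K b δ κ β hU hΦ hΨ hW x t]
    simp only [Ederiv, Dissf]
    rw [sy1, sy2, sy3, sy4]
    linear_combination (2 * DT (UC u) (x,t)) * e1 + (2 * DT (UC φ) (x,t)) * e2
      + (2 * DT (UC ψ) (x,t)) * e3 + (2 * DT (UC w) (x,t)) * e4
  -- boundary values of the flux
  have hG0 : ∀ t : ℝ, 0 < t →
      Gfun α K b δ κ β (UC u) (UC φ) (UC ψ) (UC w) (0, t) = 0 := by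
    intro t ht
    have b1 : DT (UC u) (0, t) = 0 := DT_boundary dU ht fun s hs => (hbc s hs).1
    have b2 : DT (UC φ) (0, t) = 0 := DT_boundary dΦ ht fun s hs => (hbc s hs).2.2.1
    have b3 : DT (UC ψ) (0, t) = 0 := DT_boundary dΨ ht fun s hs => (hbc s hs).2.2.2.2.1
    have b4 : DT (UC w) (0, t) = 0 := DT_boundary dW ht fun s hs => (hbc s hs).2.2.2.2.2.2.1
    simp [Gfun, b1, b2, b3, b4]
  have hGL : ∀ t : ℝ, 0 < t →
      Gfun α K b δ κ β (UC u) (UC φ) (UC ψ) (UC w) (L, t) = 0 := by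
    intro t ht
    have b1 : DT (UC u) (L, t) = 0 := DT_boundary dU ht fun s hs => (hbc s hs).2.1
    have b2 : DT (UC φ) (L, t) = 0 := DT_boundary dΦ ht fun s hs => (hbc s hs).2.2.2.1
    have b3 : DT (UC ψ) (L, t) = 0 := DT_boundary dΨ ht fun s hs => (hbc s hs).2.2.2.2.2.1
    have b4 : DT (UC w) (L, t) = 0 := DT_boundary dW ht fun s hs => (hbc s hs).2.2.2.2.2.2.2
    simp [Gfun, b1, b2, b3, b4]
  -- flux integral vanishes
  have hGd : Differentiable ℝ (Gfun α K b δ κ β (UC u) (UC φ) (UC ψ) (UC w)) :=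
    (contDiff_Gfun α K b δ κ β hU hΦ hΨ hW).differentiable one_ne_zero
  have hDXGcont : Continuous (DX (Gfun α K b δ κ β (UC u) (UC φ) (UC ψ) (UC w))) :=
    (contDiff_DX (contDiff_Gfun α K b δ κ β hU hΦ hΨ hW)
      (show (0:WithTop ℕ∞)+1 ≤ 1 by norm_num)).continuous
  have hflux : ∀ t : ℝ, 0 < t →
      (∫ x in (0:ℝ)..L,
        DX (Gfun α K b δ κ β (UC u) (UC φ) (UC ψ) (UC w)) (x, t)) = 0 := by
    intro t ht
    have hint : IntervalIntegrable
        (fun x => DX (Gfun α K b δ κ β (UC u) (UC φ) (UC ψ) (UC w)) (x, t)) volume 0 L :=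
      (hDXGcont.comp (continuous_id.prodMk continuous_const)).intervalIntegrable 0 L
    have h := intervalIntegral.integral_eq_sub_of_hasDerivAt
      (f := fun y => Gfun α K b δ κ β (UC u) (UC φ) (UC ψ) (UC w) (y, t))
      (f' := fun x => DX (Gfun α K b δ κ β (UC u) (UC φ) (UC ψ) (UC w)) (x, t))
      (fun x _ => sliceX (hGd (x, t))) hint
    simp only [hG0 t ht, hGL t ht] at h
    simpa using h
  -- deriv nonpositive for positive times
  have hdnp : ∀ t : ℝ, 0 < t →
      deriv (fun t => energy L ρ α lm ρ₁ K b ρ₃ δ u φ ψ w t) t ≤ 0 := by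
    intro t ht
    rw [(hEd t).deriv]
    have hcongr : (∫ x in (0:ℝ)..L,
          Ederiv ρ α lm ρ₁ K b ρ₃ δ (UC u) (UC φ) (UC ψ) (UC w) (x, t))
        = ∫ x in (0:ℝ)..L,
            (2 * DX (Gfun α K b δ κ β (UC u) (UC φ) (UC ψ) (UC w)) (x, t)
              - Dissf μ γ κ (UC u) (UC φ) (UC w) (x, t)) := by
      apply intervalIntegral.integral_congr_ae
      have hae : ∀ᵐ x : ℝ, x ≠ L := by
        refine MeasureTheory.ae_iff.2 ?_
        simp only [ne_eq, not_not, setOf_eq_eq_singleton]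
        exact measure_singleton L
      filter_upwards [hae] with x hxL hxI
      have hx : x ∈ Ioo (0:ℝ) L := by
        rw [uIoc_of_le hL.le] at hxI
        exact ⟨hxI.1, lt_of_le_of_ne hxI.2 hxL⟩
      exact hpoint x hx t ht
    have hint1 : IntervalIntegrable
        (fun x => 2 * DX (Gfun α K b δ κ β (UC u) (UC φ) (UC ψ) (UC w)) (x, t)) volume 0 L :=
      ((continuous_const.mul (hDXGcont.comp
        (continuous_id.prodMk continuous_const)))).intervalIntegrable 0 L
    have hint2 : IntervalIntegrable
        (fun x => Dissf μ γ κ (UC u) (UC φ) (UC w) (x, t)) volume 0 L :=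
      (((cont_Dissf μ γ κ hU hΦ hΨ hW)).comp
        (continuous_id.prodMk continuous_const)).intervalIntegrable 0 L
    rw [hcongr, intervalIntegral.integral_sub hint1 hint2]
    have h1 : (∫ x in (0:ℝ)..L,
        2 * DX (Gfun α K b δ κ β (UC u) (UC φ) (UC ψ) (UC w)) (x, t)) = 0 := by
      rw [intervalIntegral.integral_const_mul, hflux t ht, mul_zero]
    have h2 : 0 ≤ ∫ x in (0:ℝ)..L, Dissf μ γ κ (UC u) (UC φ) (UC w) (x, t) := by
      refine intervalIntegral.integral_nonneg hL.le fun x _ => ?_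
      unfold Dissf
      positivity
    rw [h1]
    nlinarith [h2]
  -- conclude by monotonicity
  have hdiffE : Differentiable ℝ (fun t => energy L ρ α lm ρ₁ K b ρ₃ δ u φ ψ w t) :=
    fun t => (hEd t).differentiableAt
  have hmono : AntitoneOn (fun t => energy L ρ α lm ρ₁ K b ρ₃ δ u φ ψ w t) (Ici 0) := by
    refine antitoneOn_of_deriv_nonpos (convex_Ici 0) hdiffE.continuous.continuousOn
      hdiffE.differentiableOn fun t htI => ?_
    rw [interior_Ici] at htI
    exact hdnp t htI
  exact ⟨fun s t hs hst => hmono (mem_Ici.2 hs) (mem_Ici.2 (hs.trans hst)) hst,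
    fun t ht => hmono self_mem_Ici (mem_Ici.2 ht) ht⟩
end
end

section
/- Let (u, φ, ψ, w) be a classical solution of the suspension-bridge Shear beam system in thermoelasticity of type III, and define I₁(t) = ∫₀^L ( ρ u_t u + (μ/2) u² ) dx + ∫₀^L ( ρ₁ φ_t φ + (γ/2) φ² ) dx. Then for every t > 0 the exact identity holds: dI₁(t)/dt = ρ ∫₀^L u_t² dx − α ∫₀^L u_x² dx − λ ∫₀^L (φ−u)² dx + ρ₁ ∫₀^L φ_t² dx − K ∫₀^L (φ_x+ψ)² dx − b ∫₀^L ψ_x² dx + β ∫₀^L w_t φ_x dx. -/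
open MeasureTheory Set

noncomputable section

/-- The auxiliary functional I₁. -/
def I1 (L ρ μ ρ₁ γ : ℝ) (u φ : ℝ → ℝ → ℝ) (t : ℝ) : ℝ :=
  (∫ x in (0:ℝ)..L, (ρ * pdt u x t * u x t + μ / 2 * (u x t)^2))
    + ∫ x in (0:ℝ)..L, (ρ₁ * pdt φ x t * φ x t + γ / 2 * (φ x t)^2)

/-- The auxiliary functional I₂. -/
def I2 (L ρ₃ κ β : ℝ) (φ w : ℝ → ℝ → ℝ) (t : ℝ) : ℝ :=
  ρ₃ * (∫ x in (0:ℝ)..L, pdt w x t * w x t)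
    + κ / 2 * (∫ x in (0:ℝ)..L, (pdx w x t)^2)
    + β * ∫ x in (0:ℝ)..L, pdx φ x t * w x t

-- ### helpers ###

def J (f : ℝ → ℝ → ℝ) : ℝ × ℝ → ℝ := fun p => f p.1 p.2
def Dt (F : ℝ × ℝ → ℝ) : ℝ × ℝ → ℝ := fun p => fderiv ℝ F p (0, 1)
def Dx (F : ℝ × ℝ → ℝ) : ℝ × ℝ → ℝ := fun p => fderiv ℝ F p (1, 0)

lemma hasDerivAt_snd' {F : ℝ × ℝ → ℝ} {x t : ℝ} (hF : DifferentiableAt ℝ F (x, t)) :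
    HasDerivAt (fun s => F (x, s)) (Dt F (x, t)) t := by
  have h : HasDerivAt (fun s : ℝ => ((x, s) : ℝ × ℝ)) ((0 : ℝ), (1 : ℝ)) t :=
    (hasDerivAt_const t x).prodMk (hasDerivAt_id t)
  exact hF.hasFDerivAt.comp_hasDerivAt t h

lemma hasDerivAt_fst' {F : ℝ × ℝ → ℝ} {x t : ℝ} (hF : DifferentiableAt ℝ F (x, t)) :
    HasDerivAt (fun y => F (y, t)) (Dx F (x, t)) x := by
  have h : HasDerivAt (fun y : ℝ => ((y, t) : ℝ × ℝ)) ((1 : ℝ), (0 : ℝ)) x :=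
    (hasDerivAt_id x).prodMk (hasDerivAt_const x t)
  exact hF.hasFDerivAt.comp_hasDerivAt x h

lemma contDiff_Dt {n m : WithTop ℕ∞} {F : ℝ × ℝ → ℝ} (hF : ContDiff ℝ m F) (h : n + 1 ≤ m) :
    ContDiff ℝ n (Dt F) :=
  (hF.fderiv_right h).clm_apply contDiff_const

lemma contDiff_Dx {n m : WithTop ℕ∞} {F : ℝ × ℝ → ℝ} (hF : ContDiff ℝ m F) (h : n + 1 ≤ m) :
    ContDiff ℝ n (Dx F) :=
  (hF.fderiv_right h).clm_apply contDiff_const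

lemma pdt_eq_Dt {f : ℝ → ℝ → ℝ} {F : ℝ × ℝ → ℝ} (h : ∀ x t : ℝ, f x t = F (x, t))
    (hF : Differentiable ℝ F) (x t : ℝ) : pdt f x t = Dt F (x, t) := by
  have h1 : HasDerivAt (fun s => f x s) (Dt F (x, t)) t :=
    (hasDerivAt_snd' (hF (x, t))).congr_of_eventuallyEq
      (Filter.Eventually.of_forall fun s => h x s)
  exact h1.deriv

lemma pdx_eq_Dx {f : ℝ → ℝ → ℝ} {F : ℝ × ℝ → ℝ} (h : ∀ x t : ℝ, f x t = F (x, t))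
    (hF : Differentiable ℝ F) (x t : ℝ) : pdx f x t = Dx F (x, t) := by
  have h1 : HasDerivAt (fun y => f y t) (Dx F (x, t)) x :=
    (hasDerivAt_fst' (hF (x, t))).congr_of_eventuallyEq
      (Filter.Eventually.of_forall fun y => h y t)
  exact h1.deriv

lemma cont_slice {G : ℝ × ℝ → ℝ} (hG : Continuous G) (t : ℝ) :
    Continuous fun x => G (x, t) := hG.comp (continuous_id.prodMk continuous_const)

lemma hasDerivAt_intervalIntegral {F F' : ℝ × ℝ → ℝ} (hF : Continuous F)
    (hF' : Continuous F')
    (hd : ∀ x s : ℝ, HasDerivAt (fun s => F (x, s)) (F' (x, s)) s) (a b t : ℝ) :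
    HasDerivAt (fun s => ∫ x in a..b, F (x, s)) (∫ x in a..b, F' (x, t)) t := by
  obtain ⟨C, hC⟩ := (isCompact_uIcc.prod (isCompact_closedBall t 1)).exists_bound_of_continuousOn
    hF'.continuousOn
  have h := intervalIntegral.hasDerivAt_integral_of_dominated_loc_of_deriv_le
    (F := fun s x => F (x, s)) (F' := fun s x => F' (x, s)) (bound := fun _ => C)
    (μ := volume) (a := a) (b := b) (x₀ := t) (s := Metric.ball t 1) (Metric.ball_mem_nhds t one_pos)
    (Filter.Eventually.of_forall fun s =>
      (hF.comp (continuous_id.prodMk continuous_const)).aestronglyMeasurable)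
    ((hF.comp (continuous_id.prodMk continuous_const)).intervalIntegrable a b)
    ((hF'.comp (continuous_id.prodMk continuous_const)).aestronglyMeasurable)
    (Filter.Eventually.of_forall fun x hx s hs => by
      exact hC (x, s) ⟨uIoc_subset_uIcc hx, Metric.ball_subset_closedBall hs⟩)
    (intervalIntegrable_const)
    (Filter.Eventually.of_forall fun x _ s _ => hd x s)
  exact h.2

lemma integral_congr_Ioo {L : ℝ} (hL : 0 ≤ L) {f g : ℝ → ℝ}
    (h : ∀ x ∈ Ioo (0:ℝ) L, f x = g x) :
    ∫ x in (0:ℝ)..L, f x = ∫ x in (0:ℝ)..L, g x := by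
  apply intervalIntegral.integral_congr_ae
  have hae : ∀ᵐ x : ℝ, x ≠ L := by
    rw [Filter.eventually_iff, mem_ae_iff]
    have : {x : ℝ | x ≠ L}ᶜ = {L} := by ext; simp
    rw [this]; exact Real.volume_singleton
  filter_upwards [hae] with x hx hmem
  rw [uIoc_of_le hL] at hmem
  exact h x ⟨hmem.1, lt_of_le_of_ne hmem.2 hx⟩

lemma ibp0 {L : ℝ} {A B A' B' : ℝ → ℝ}
    (hA : ∀ x, HasDerivAt A (A' x) x) (hB : ∀ x, HasDerivAt B (B' x) x)
    (hA' : Continuous A') (hB' : Continuous B')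
    (h0 : A 0 * B 0 = 0) (hLv : A L * B L = 0) :
    ∫ x in (0:ℝ)..L, A' x * B x = - ∫ x in (0:ℝ)..L, A x * B' x := by
  have h := intervalIntegral.integral_mul_deriv_eq_deriv_mul (u := A) (v := B)
    (u' := A') (v' := B') (a := 0) (b := L) (fun x _ => hA x) (fun x _ => hB x)
    (hA'.intervalIntegrable _ _) (hB'.intervalIntegrable _ _)
  rw [h0, hLv] at h
  linarith

lemma split2 {a b : ℝ} {f g : ℝ → ℝ} (hf : Continuous f) (hg : Continuous g) (c₁ c₂ : ℝ) :
    ∫ x in a..b, (c₁ * f x + c₂ * g x)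
      = c₁ * (∫ x in a..b, f x) + c₂ * ∫ x in a..b, g x := by
  rw [intervalIntegral.integral_add (f := fun x => c₁ * f x) (g := fun x => c₂ * g x)
      ((continuous_const.mul hf).intervalIntegrable _ _)
      ((continuous_const.mul hg).intervalIntegrable _ _),
    intervalIntegral.integral_const_mul, intervalIntegral.integral_const_mul]

lemma split3 {a b : ℝ} {f g h : ℝ → ℝ} (hf : Continuous f) (hg : Continuous g)
    (hh : Continuous h) (c₁ c₂ c₃ : ℝ) :
    ∫ x in a..b, (c₁ * f x + c₂ * g x + c₃ * h x)
      = c₁ * (∫ x in a..b, f x) + c₂ * (∫ x in a..b, g x) + c₃ * ∫ x in a..b, h x := by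
  rw [intervalIntegral.integral_add (f := fun x => c₁ * f x + c₂ * g x)
      (g := fun x => c₃ * h x)
      (((continuous_const.mul hf).add (continuous_const.mul hg)).intervalIntegrable _ _)
      ((continuous_const.mul hh).intervalIntegrable _ _), split2 hf hg,
    intervalIntegral.integral_const_mul]

lemma split4 {a b : ℝ} {f g h k : ℝ → ℝ} (hf : Continuous f) (hg : Continuous g)
    (hh : Continuous h) (hk : Continuous k) (c₁ c₂ c₃ c₄ : ℝ) :
    ∫ x in a..b, (c₁ * f x + c₂ * g x + c₃ * h x + c₄ * k x)
      = c₁ * (∫ x in a..b, f x) + c₂ * (∫ x in a..b, g x) + c₃ * (∫ x in a..b, h x)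
        + c₄ * ∫ x in a..b, k x := by
  rw [intervalIntegral.integral_add (f := fun x => c₁ * f x + c₂ * g x + c₃ * h x)
      (g := fun x => c₄ * k x)
      ((((continuous_const.mul hf).add (continuous_const.mul hg)).add
        (continuous_const.mul hh)).intervalIntegrable _ _)
      ((continuous_const.mul hk).intervalIntegrable _ _), split3 hf hg hh,
    intervalIntegral.integral_const_mul]


/-- exact derivative identity for the functional I₁. -/
theorem I1_derivative_identity
    {L ρ α lm μ ρ₁ K γ b ρ₃ δ κ β : ℝ}
    (hL : 0 < L) (hρ : 0 < ρ) (hα : 0 < α) (hlm : 0 < lm) (hμ : 0 < μ)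
    (hρ₁ : 0 < ρ₁) (hK : 0 < K) (hγ : 0 < γ) (hb : 0 < b) (hρ₃ : 0 < ρ₃)
    (hδ : 0 < δ) (hκ : 0 < κ) (hβ : β ≠ 0)
    {u φ ψ w : ℝ → ℝ → ℝ}
    (hsol : IsShearSolution L ρ α lm μ ρ₁ K γ b ρ₃ δ κ β u φ ψ w) :
    ∀ t : ℝ, 0 < t →
      HasDerivAt (I1 L ρ μ ρ₁ γ u φ)
        (ρ * (∫ x in (0:ℝ)..L, (pdt u x t)^2)
          - α * (∫ x in (0:ℝ)..L, (pdx u x t)^2)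
          - lm * (∫ x in (0:ℝ)..L, (φ x t - u x t)^2)
          + ρ₁ * (∫ x in (0:ℝ)..L, (pdt φ x t)^2)
          - K * (∫ x in (0:ℝ)..L, (pdx φ x t + ψ x t)^2)
          - b * (∫ x in (0:ℝ)..L, (pdx ψ x t)^2)
          + β * (∫ x in (0:ℝ)..L, pdt w x t * pdx φ x t)) t := by
  intro t ht
  have hL0 : (0:ℝ) ≤ L := hL.le
  -- joint smoothness
  have hJu : ContDiff ℝ 3 (J u) := hsol.smooth_u
  have hJφ : ContDiff ℝ 3 (J φ) := hsol.smooth_phi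
  have hJψ : ContDiff ℝ 3 (J ψ) := hsol.smooth_psi
  have hJw : ContDiff ℝ 3 (J w) := hsol.smooth_w
  -- derived smoothness
  have hDtJu : ContDiff ℝ 2 (Dt (J u)) := contDiff_Dt hJu (by norm_num)
  have hDxJu : ContDiff ℝ 2 (Dx (J u)) := contDiff_Dx hJu (by norm_num)
  have hDtDtJu : ContDiff ℝ 1 (Dt (Dt (J u))) := contDiff_Dt hDtJu (by norm_num)
  have hDxDxJu : ContDiff ℝ 1 (Dx (Dx (J u))) := contDiff_Dx hDxJu (by norm_num)
  have hDtJφ : ContDiff ℝ 2 (Dt (J φ)) := contDiff_Dt hJφ (by norm_num)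
  have hDxJφ : ContDiff ℝ 2 (Dx (J φ)) := contDiff_Dx hJφ (by norm_num)
  have hDtDtJφ : ContDiff ℝ 1 (Dt (Dt (J φ))) := contDiff_Dt hDtJφ (by norm_num)
  have hsum2 : ContDiff ℝ 2 (fun p => Dx (J φ) p + J ψ p) :=
    hDxJφ.add (hJψ.of_le (by norm_num))
  have hDxsum : ContDiff ℝ 1 (Dx (fun p => Dx (J φ) p + J ψ p)) :=
    contDiff_Dx hsum2 (by norm_num)
  have hDxJψ : ContDiff ℝ 2 (Dx (J ψ)) := contDiff_Dx hJψ (by norm_num)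
  have hDxDxJψ : ContDiff ℝ 1 (Dx (Dx (J ψ))) := contDiff_Dx hDxJψ (by norm_num)
  have hDtJw : ContDiff ℝ 2 (Dt (J w)) := contDiff_Dt hJw (by norm_num)
  have hDxDtJw : ContDiff ℝ 1 (Dx (Dt (J w))) := contDiff_Dx hDtJw (by norm_num)
  -- differentiability
  have one3 : (1 : WithTop ℕ∞) ≤ 3 := by norm_num
  have one2 : (1 : WithTop ℕ∞) ≤ 2 := by norm_num
  have dJu : Differentiable ℝ (J u) := hJu.differentiable (by norm_num)
  have dJφ : Differentiable ℝ (J φ) := hJφ.differentiable (by norm_num)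
  have dJψ : Differentiable ℝ (J ψ) := hJψ.differentiable (by norm_num)
  have dJw : Differentiable ℝ (J w) := hJw.differentiable (by norm_num)
  have dDtJu : Differentiable ℝ (Dt (J u)) := hDtJu.differentiable (by norm_num)
  have dDxJu : Differentiable ℝ (Dx (J u)) := hDxJu.differentiable (by norm_num)
  have dDtJφ : Differentiable ℝ (Dt (J φ)) := hDtJφ.differentiable (by norm_num)
  have dDxJφ : Differentiable ℝ (Dx (J φ)) := hDxJφ.differentiable (by norm_num)
  have dsum : Differentiable ℝ (fun p => Dx (J φ) p + J ψ p) := hsum2.differentiable (by norm_num)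
  have dDxJψ : Differentiable ℝ (Dx (J ψ)) := hDxJψ.differentiable (by norm_num)
  have dDtJw : Differentiable ℝ (Dt (J w)) := hDtJw.differentiable (by norm_num)
  -- continuity
  have cJu : Continuous (J u) := hJu.continuous
  have cJφ : Continuous (J φ) := hJφ.continuous
  have cJψ : Continuous (J ψ) := hJψ.continuous
  have cDtJu : Continuous (Dt (J u)) := hDtJu.continuous
  have cDxJu : Continuous (Dx (J u)) := hDxJu.continuous
  have cDtDtJu : Continuous (Dt (Dt (J u))) := hDtDtJu.continuous
  have cDxDxJu : Continuous (Dx (Dx (J u))) := hDxDxJu.continuous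
  have cDtJφ : Continuous (Dt (J φ)) := hDtJφ.continuous
  have cDxJφ : Continuous (Dx (J φ)) := hDxJφ.continuous
  have cDtDtJφ : Continuous (Dt (Dt (J φ))) := hDtDtJφ.continuous
  have cDxsum : Continuous (Dx (fun p => Dx (J φ) p + J ψ p)) := hDxsum.continuous
  have cDxJψ : Continuous (Dx (J ψ)) := hDxJψ.continuous
  have cDxDxJψ : Continuous (Dx (Dx (J ψ))) := hDxDxJψ.continuous
  have cDtJw : Continuous (Dt (J w)) := hDtJw.continuous
  have cDxDtJw : Continuous (Dx (Dt (J w))) := hDxDtJw.continuous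
  -- value lemmas
  have vu_t : ∀ x s : ℝ, pdt u x s = Dt (J u) (x, s) := pdt_eq_Dt (fun _ _ => rfl) dJu
  have vu_x : ∀ x s : ℝ, pdx u x s = Dx (J u) (x, s) := pdx_eq_Dx (fun _ _ => rfl) dJu
  have vφ_t : ∀ x s : ℝ, pdt φ x s = Dt (J φ) (x, s) := pdt_eq_Dt (fun _ _ => rfl) dJφ
  have vφ_x : ∀ x s : ℝ, pdx φ x s = Dx (J φ) (x, s) := pdx_eq_Dx (fun _ _ => rfl) dJφ
  have vψ_x : ∀ x s : ℝ, pdx ψ x s = Dx (J ψ) (x, s) := pdx_eq_Dx (fun _ _ => rfl) dJψ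
  have vw_t : ∀ x s : ℝ, pdt w x s = Dt (J w) (x, s) := pdt_eq_Dt (fun _ _ => rfl) dJw
  have vu_tt : ∀ x s : ℝ, pdt (pdt u) x s = Dt (Dt (J u)) (x, s) := pdt_eq_Dt vu_t dDtJu
  have vu_xx : ∀ x s : ℝ, pdx (pdx u) x s = Dx (Dx (J u)) (x, s) := pdx_eq_Dx vu_x dDxJu
  have vφ_tt : ∀ x s : ℝ, pdt (pdt φ) x s = Dt (Dt (J φ)) (x, s) := pdt_eq_Dt vφ_t dDtJφ
  have vψ_xx : ∀ x s : ℝ, pdx (pdx ψ) x s = Dx (Dx (J ψ)) (x, s) := pdx_eq_Dx vψ_x dDxJψ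
  have vw_tx : ∀ x s : ℝ, pdx (pdt w) x s = Dx (Dt (J w)) (x, s) := pdx_eq_Dx vw_t dDtJw
  have vmix : ∀ x s : ℝ, pdx (fun y s => pdx φ y s + ψ y s) x s
      = Dx (fun p => Dx (J φ) p + J ψ p) (x, s) :=
    pdx_eq_Dx (fun x s => by
      show pdx φ x s + ψ x s = Dx (J φ) (x, s) + J ψ (x, s)
      rw [vφ_x]; rfl) dsum
  -- boundary values
  obtain ⟨b1, b2, b3, b4, b5, b6, b7, b8⟩ := hsol.bc t ht.le
  -- derivative of first integral
  have HD1 := hasDerivAt_intervalIntegral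
    (F := fun p => ρ * (Dt (J u) p * J u p) + μ / 2 * (J u p * J u p))
    (F' := fun p => ρ * (Dt (Dt (J u)) p * J u p + Dt (J u) p * Dt (J u) p)
      + μ / 2 * (Dt (J u) p * J u p + J u p * Dt (J u) p))
    ((continuous_const.mul (cDtJu.mul cJu)).add (continuous_const.mul (cJu.mul cJu)))
    ((continuous_const.mul ((cDtDtJu.mul cJu).add (cDtJu.mul cDtJu))).add
      (continuous_const.mul ((cDtJu.mul cJu).add (cJu.mul cDtJu))))
    (fun x s => by
      have d0 : HasDerivAt (fun s => J u (x, s)) (Dt (J u) (x, s)) s :=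
        hasDerivAt_snd' (dJu _)
      have d1 : HasDerivAt (fun s => Dt (J u) (x, s)) (Dt (Dt (J u)) (x, s)) s :=
        hasDerivAt_snd' (dDtJu _)
      exact ((d1.mul d0).const_mul ρ).add ((d0.mul d0).const_mul (μ / 2)))
    0 L t
  have HD2 := hasDerivAt_intervalIntegral
    (F := fun p => ρ₁ * (Dt (J φ) p * J φ p) + γ / 2 * (J φ p * J φ p))
    (F' := fun p => ρ₁ * (Dt (Dt (J φ)) p * J φ p + Dt (J φ) p * Dt (J φ) p)
      + γ / 2 * (Dt (J φ) p * J φ p + J φ p * Dt (J φ) p))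
    ((continuous_const.mul (cDtJφ.mul cJφ)).add (continuous_const.mul (cJφ.mul cJφ)))
    ((continuous_const.mul ((cDtDtJφ.mul cJφ).add (cDtJφ.mul cDtJφ))).add
      (continuous_const.mul ((cDtJφ.mul cJφ).add (cJφ.mul cDtJφ))))
    (fun x s => by
      have d0 : HasDerivAt (fun s => J φ (x, s)) (Dt (J φ) (x, s)) s :=
        hasDerivAt_snd' (dJφ _)
      have d1 : HasDerivAt (fun s => Dt (J φ) (x, s)) (Dt (Dt (J φ)) (x, s)) s :=
        hasDerivAt_snd' (dDtJφ _)
      exact ((d1.mul d0).const_mul ρ₁).add ((d0.mul d0).const_mul (γ / 2)))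
    0 L t
  -- the functional I1 agrees with the differentiated function
  have hfun : I1 L ρ μ ρ₁ γ u φ =ᶠ[nhds t]
      (fun s => (∫ x in (0:ℝ)..L, (ρ * (Dt (J u) (x, s) * J u (x, s))
          + μ / 2 * (J u (x, s) * J u (x, s))))
        + ∫ x in (0:ℝ)..L, (ρ₁ * (Dt (J φ) (x, s) * J φ (x, s))
          + γ / 2 * (J φ (x, s) * J φ (x, s)))) := by
    apply Filter.Eventually.of_forall
    intro s
    unfold I1
    congr 1
    · refine intervalIntegral.integral_congr fun x _ => ?_
      show ρ * pdt u x s * u x s + μ / 2 * (u x s)^2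
        = ρ * (Dt (J u) (x, s) * J u (x, s)) + μ / 2 * (J u (x, s) * J u (x, s))
      rw [vu_t x s]
      show ρ * Dt (J u) (x, s) * u x s + μ / 2 * (u x s) ^ 2
        = ρ * (Dt (J u) (x, s) * u x s) + μ / 2 * (u x s * u x s)
      ring
    · refine intervalIntegral.integral_congr fun x _ => ?_
      show ρ₁ * pdt φ x s * φ x s + γ / 2 * (φ x s)^2
        = ρ₁ * (Dt (J φ) (x, s) * J φ (x, s)) + γ / 2 * (J φ (x, s) * J φ (x, s))
      rw [vφ_t x s]
      show ρ₁ * Dt (J φ) (x, s) * φ x s + γ / 2 * (φ x s) ^ 2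
        = ρ₁ * (Dt (J φ) (x, s) * φ x s) + γ / 2 * (φ x s * φ x s)
      ring
  have HD : HasDerivAt (I1 L ρ μ ρ₁ γ u φ)
      ((∫ x in (0:ℝ)..L, (ρ * (Dt (Dt (J u)) (x, t) * J u (x, t)
          + Dt (J u) (x, t) * Dt (J u) (x, t))
        + μ / 2 * (Dt (J u) (x, t) * J u (x, t) + J u (x, t) * Dt (J u) (x, t))))
      + ∫ x in (0:ℝ)..L, (ρ₁ * (Dt (Dt (J φ)) (x, t) * J φ (x, t)
          + Dt (J φ) (x, t) * Dt (J φ) (x, t))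
        + γ / 2 * (Dt (J φ) (x, t) * J φ (x, t) + J φ (x, t) * Dt (J φ) (x, t)))) t :=
    (HD1.add HD2).congr_of_eventuallyEq hfun
  -- value computations
  have V1 : (∫ x in (0:ℝ)..L, (ρ * (Dt (Dt (J u)) (x, t) * J u (x, t)
          + Dt (J u) (x, t) * Dt (J u) (x, t))
        + μ / 2 * (Dt (J u) (x, t) * J u (x, t) + J u (x, t) * Dt (J u) (x, t))))
      = ρ * (∫ x in (0:ℝ)..L, Dt (J u) (x, t) * Dt (J u) (x, t))
        + α * (∫ x in (0:ℝ)..L, Dx (Dx (J u)) (x, t) * J u (x, t))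
        + lm * (∫ x in (0:ℝ)..L, (J φ (x, t) - J u (x, t)) * J u (x, t)) := by
    rw [integral_congr_Ioo hL0 (g := fun x =>
        ρ * (Dt (J u) (x, t) * Dt (J u) (x, t))
          + α * (Dx (Dx (J u)) (x, t) * J u (x, t))
          + lm * ((J φ (x, t) - J u (x, t)) * J u (x, t)))
      (fun x hx => by
        have e1 := hsol.eq1 x hx t ht
        rw [vu_tt x t, vu_xx x t, vu_t x t,
          show φ x t = J φ (x, t) from rfl, show u x t = J u (x, t) from rfl] at e1
        linear_combination J u (x, t) * e1)]
    exact split3 ((cont_slice cDtJu t).mul (cont_slice cDtJu t))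
      ((cont_slice cDxDxJu t).mul (cont_slice cJu t))
      (((cont_slice cJφ t).sub (cont_slice cJu t)).mul (cont_slice cJu t)) ρ α lm
  have V2 : (∫ x in (0:ℝ)..L, (ρ₁ * (Dt (Dt (J φ)) (x, t) * J φ (x, t)
          + Dt (J φ) (x, t) * Dt (J φ) (x, t))
        + γ / 2 * (Dt (J φ) (x, t) * J φ (x, t) + J φ (x, t) * Dt (J φ) (x, t))))
      = ρ₁ * (∫ x in (0:ℝ)..L, Dt (J φ) (x, t) * Dt (J φ) (x, t))
        + K * (∫ x in (0:ℝ)..L, Dx (fun p => Dx (J φ) p + J ψ p) (x, t) * J φ (x, t))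
        + (-lm) * (∫ x in (0:ℝ)..L, (J φ (x, t) - J u (x, t)) * J φ (x, t))
        + (-β) * (∫ x in (0:ℝ)..L, Dx (Dt (J w)) (x, t) * J φ (x, t)) := by
    rw [integral_congr_Ioo hL0 (g := fun x =>
        ρ₁ * (Dt (J φ) (x, t) * Dt (J φ) (x, t))
          + K * (Dx (fun p => Dx (J φ) p + J ψ p) (x, t) * J φ (x, t))
          + (-lm) * ((J φ (x, t) - J u (x, t)) * J φ (x, t))
          + (-β) * (Dx (Dt (J w)) (x, t) * J φ (x, t)))
      (fun x hx => by
        have e2 := hsol.eq2 x hx t ht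
        rw [vφ_tt x t, vmix x t, vφ_t x t, vw_tx x t,
          show φ x t = J φ (x, t) from rfl, show u x t = J u (x, t) from rfl] at e2
        linear_combination J φ (x, t) * e2)]
    exact split4 ((cont_slice cDtJφ t).mul (cont_slice cDtJφ t))
      ((cont_slice cDxsum t).mul (cont_slice cJφ t))
      (((cont_slice cJφ t).sub (cont_slice cJu t)).mul (cont_slice cJφ t))
      ((cont_slice cDxDtJw t).mul (cont_slice cJφ t)) ρ₁ K (-lm) (-β)
  -- integration by parts
  have P1 : (∫ x in (0:ℝ)..L, Dx (Dx (J u)) (x, t) * J u (x, t))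
      = - ∫ x in (0:ℝ)..L, Dx (J u) (x, t) * Dx (J u) (x, t) :=
    ibp0 (fun x => hasDerivAt_fst' (dDxJu _)) (fun x => hasDerivAt_fst' (dJu _))
      (cont_slice cDxDxJu t) (cont_slice cDxJu t)
      (by simp [J, b1]) (by simp [J, b2])
  have P2 : (∫ x in (0:ℝ)..L, Dx (fun p => Dx (J φ) p + J ψ p) (x, t) * J φ (x, t))
      = - ∫ x in (0:ℝ)..L, (Dx (J φ) (x, t) + J ψ (x, t)) * Dx (J φ) (x, t) :=
    ibp0 (A := fun x => Dx (J φ) (x, t) + J ψ (x, t))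
      (fun x => hasDerivAt_fst' (dsum _)) (fun x => hasDerivAt_fst' (dJφ _))
      (cont_slice cDxsum t) (cont_slice cDxJφ t)
      (by simp [J, b3]) (by simp [J, b4])
  have P3 : (∫ x in (0:ℝ)..L, Dx (Dx (J ψ)) (x, t) * J ψ (x, t))
      = - ∫ x in (0:ℝ)..L, Dx (J ψ) (x, t) * Dx (J ψ) (x, t) :=
    ibp0 (fun x => hasDerivAt_fst' (dDxJψ _)) (fun x => hasDerivAt_fst' (dJψ _))
      (cont_slice cDxDxJψ t) (cont_slice cDxJψ t)
      (by simp [J, b5]) (by simp [J, b6])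
  have P4 : (∫ x in (0:ℝ)..L, Dx (Dt (J w)) (x, t) * J φ (x, t))
      = - ∫ x in (0:ℝ)..L, Dt (J w) (x, t) * Dx (J φ) (x, t) :=
    ibp0 (fun x => hasDerivAt_fst' (dDtJw _)) (fun x => hasDerivAt_fst' (dJφ _))
      (cont_slice cDxDtJw t) (cont_slice cDxJφ t)
      (by simp [J, b3]) (by simp [J, b4])
  -- splitting the shear term
  have E3 : (∫ x in (0:ℝ)..L, (Dx (J φ) (x, t) + J ψ (x, t)) * Dx (J φ) (x, t))
      = (∫ x in (0:ℝ)..L, (Dx (J φ) (x, t) + J ψ (x, t)) * (Dx (J φ) (x, t) + J ψ (x, t)))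
        - ∫ x in (0:ℝ)..L, (Dx (J φ) (x, t) + J ψ (x, t)) * J ψ (x, t) := by
    have h := split2 (a := (0:ℝ)) (b := L)
      (f := fun x => (Dx (J φ) (x, t) + J ψ (x, t)) * (Dx (J φ) (x, t) + J ψ (x, t)))
      (g := fun x => (Dx (J φ) (x, t) + J ψ (x, t)) * J ψ (x, t))
      (((cont_slice cDxJφ t).add (cont_slice cJψ t)).mul
        ((cont_slice cDxJφ t).add (cont_slice cJψ t)))
      (((cont_slice cDxJφ t).add (cont_slice cJψ t)).mul (cont_slice cJψ t)) 1 (-1)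
    rw [intervalIntegral.integral_congr (g := fun x =>
        1 * ((Dx (J φ) (x, t) + J ψ (x, t)) * (Dx (J φ) (x, t) + J ψ (x, t)))
          + (-1) * ((Dx (J φ) (x, t) + J ψ (x, t)) * J ψ (x, t)))
      (fun x _ => by ring), h]
    ring
  -- eq3 substitution
  have E4 : K * (∫ x in (0:ℝ)..L, (Dx (J φ) (x, t) + J ψ (x, t)) * J ψ (x, t))
      = -(b * ∫ x in (0:ℝ)..L, Dx (J ψ) (x, t) * Dx (J ψ) (x, t)) := by
    rw [← intervalIntegral.integral_const_mul,
      integral_congr_Ioo hL0 (g := fun x => b * (Dx (Dx (J ψ)) (x, t) * J ψ (x, t)))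
      (fun x hx => by
        have e3 := hsol.eq3 x hx t ht
        rw [vψ_xx x t, vφ_x x t, show ψ x t = J ψ (x, t) from rfl] at e3
        linear_combination J ψ (x, t) * e3),
      intervalIntegral.integral_const_mul, P3]
    ring
  -- the λ-terms
  have E5 : (∫ x in (0:ℝ)..L, (J φ (x, t) - J u (x, t)) * J u (x, t))
      = (∫ x in (0:ℝ)..L, (J φ (x, t) - J u (x, t)) * J φ (x, t))
        - ∫ x in (0:ℝ)..L, (J φ (x, t) - J u (x, t)) * (J φ (x, t) - J u (x, t)) := by
    have h := split2 (a := (0:ℝ)) (b := L)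
      (f := fun x => (J φ (x, t) - J u (x, t)) * J φ (x, t))
      (g := fun x => (J φ (x, t) - J u (x, t)) * (J φ (x, t) - J u (x, t)))
      (((cont_slice cJφ t).sub (cont_slice cJu t)).mul (cont_slice cJφ t))
      (((cont_slice cJφ t).sub (cont_slice cJu t)).mul
        ((cont_slice cJφ t).sub (cont_slice cJu t))) 1 (-1)
    rw [intervalIntegral.integral_congr (g := fun x =>
        1 * ((J φ (x, t) - J u (x, t)) * J φ (x, t))
          + (-1) * ((J φ (x, t) - J u (x, t)) * (J φ (x, t) - J u (x, t))))
      (fun x _ => by ring), h]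
    ring
  -- convert the target integrals
  have T1 : (∫ x in (0:ℝ)..L, (pdt u x t)^2)
      = ∫ x in (0:ℝ)..L, Dt (J u) (x, t) * Dt (J u) (x, t) :=
    intervalIntegral.integral_congr fun x _ => by rw [vu_t x t]; ring
  have T2 : (∫ x in (0:ℝ)..L, (pdx u x t)^2)
      = ∫ x in (0:ℝ)..L, Dx (J u) (x, t) * Dx (J u) (x, t) :=
    intervalIntegral.integral_congr fun x _ => by rw [vu_x x t]; ring
  have T3 : (∫ x in (0:ℝ)..L, (φ x t - u x t)^2)
      = ∫ x in (0:ℝ)..L, (J φ (x, t) - J u (x, t)) * (J φ (x, t) - J u (x, t)) :=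
    intervalIntegral.integral_congr fun x _ => by
      show (φ x t - u x t)^2 = (J φ (x, t) - J u (x, t)) * (J φ (x, t) - J u (x, t))
      rw [show J φ (x, t) = φ x t from rfl, show J u (x, t) = u x t from rfl]; ring
  have T4 : (∫ x in (0:ℝ)..L, (pdt φ x t)^2)
      = ∫ x in (0:ℝ)..L, Dt (J φ) (x, t) * Dt (J φ) (x, t) :=
    intervalIntegral.integral_congr fun x _ => by rw [vφ_t x t]; ring
  have T5 : (∫ x in (0:ℝ)..L, (pdx φ x t + ψ x t)^2)
      = ∫ x in (0:ℝ)..L, (Dx (J φ) (x, t) + J ψ (x, t)) * (Dx (J φ) (x, t) + J ψ (x, t)) :=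
    intervalIntegral.integral_congr fun x _ => by
      rw [show J ψ (x, t) = ψ x t from rfl, vφ_x x t]; ring
  have T6 : (∫ x in (0:ℝ)..L, (pdx ψ x t)^2)
      = ∫ x in (0:ℝ)..L, Dx (J ψ) (x, t) * Dx (J ψ) (x, t) :=
    intervalIntegral.integral_congr fun x _ => by rw [vψ_x x t]; ring
  have T7 : (∫ x in (0:ℝ)..L, pdt w x t * pdx φ x t)
      = ∫ x in (0:ℝ)..L, Dt (J w) (x, t) * Dx (J φ) (x, t) :=
    intervalIntegral.integral_congr fun x _ => by rw [vw_t x t, vφ_x x t]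
  -- conclude
  rw [T1, T2, T3, T4, T5, T6, T7]
  have hval := HD
  rw [V1, V2, P1, P2, E3, E5, P4] at hval
  have goal_eq : ρ * (∫ x in (0:ℝ)..L, Dt (J u) (x, t) * Dt (J u) (x, t))
      + α * (-∫ x in (0:ℝ)..L, Dx (J u) (x, t) * Dx (J u) (x, t))
      + lm * ((∫ x in (0:ℝ)..L, (J φ (x, t) - J u (x, t)) * J φ (x, t))
        - ∫ x in (0:ℝ)..L, (J φ (x, t) - J u (x, t)) * (J φ (x, t) - J u (x, t)))
      + (ρ₁ * (∫ x in (0:ℝ)..L, Dt (J φ) (x, t) * Dt (J φ) (x, t))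
        + K * (-((∫ x in (0:ℝ)..L, (Dx (J φ) (x, t) + J ψ (x, t))
            * (Dx (J φ) (x, t) + J ψ (x, t)))
          - ∫ x in (0:ℝ)..L, (Dx (J φ) (x, t) + J ψ (x, t)) * J ψ (x, t)))
        + (-lm) * (∫ x in (0:ℝ)..L, (J φ (x, t) - J u (x, t)) * J φ (x, t))
        + (-β) * (-∫ x in (0:ℝ)..L, Dt (J w) (x, t) * Dx (J φ) (x, t)))
      = ρ * (∫ x in (0:ℝ)..L, Dt (J u) (x, t) * Dt (J u) (x, t))
        - α * (∫ x in (0:ℝ)..L, Dx (J u) (x, t) * Dx (J u) (x, t))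
        - lm * (∫ x in (0:ℝ)..L, (J φ (x, t) - J u (x, t)) * (J φ (x, t) - J u (x, t)))
        + ρ₁ * (∫ x in (0:ℝ)..L, Dt (J φ) (x, t) * Dt (J φ) (x, t))
        - K * (∫ x in (0:ℝ)..L, (Dx (J φ) (x, t) + J ψ (x, t))
            * (Dx (J φ) (x, t) + J ψ (x, t)))
        - b * (∫ x in (0:ℝ)..L, Dx (J ψ) (x, t) * Dx (J ψ) (x, t))
        + β * (∫ x in (0:ℝ)..L, Dt (J w) (x, t) * Dx (J φ) (x, t)) := by
    linear_combination E4
  rw [goal_eq] at hval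
  exact hval
end
end
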